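/- arXiv:0901.3864 — 4 statements merged into one kernel-verified Lean document; each statement's English description precedes it below -/
import Mathlib

section
/- Suppose Γ : B → B is L-Lipschitz (condition (b)) for some positive bounded linear operator L, and let U′ ⊆ U be a closed convex subset of the unit ball such that Γ(U′) ⊆ U′. Then for every u₀ ∈ U′ the Cauchy problem u_t + u = Γ(u), u(0) = u₀ has a unique solution u(t), and u(t) ∈ U′ for every t ≥ 0. -/
/- STATEMENT 3 -/

open MeasureTheory Filter Set
open scoped NNReal ENNReal BigOperators Topology
open scoped BoundedContinuousFunction

private lemma aux_mem {E : Type*} [NormedAddCommGroup E] [NormedSpace ℝ E] [CompleteSpace E]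
    {U' : Set E} (hconv : Convex ℝ U') (hclosed : IsClosed U')
    {u₀ : E} (hu₀ : u₀ ∈ U') {g : ℝ → E} (hg : Continuous g) (hgU : ∀ s, g s ∈ U')
    {τ : ℝ} (hτ : 0 ≤ τ) :
    Real.exp (-τ) • (u₀ + ∫ s in (0:ℝ)..τ, Real.exp s • g s) ∈ U' := by
  rcases eq_or_lt_of_le hτ with h0 | h0
  · simp [← h0, hu₀]
  set a : ℝ := Real.exp (-τ) with ha
  have ha0 : 0 < a := Real.exp_pos _
  have ha1 : a < 1 := Real.exp_lt_one_iff.2 (by linarith)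
  have h1a : 0 < 1 - a := by linarith
  set ρ : ℝ → ℝ≥0 := fun s => Real.toNNReal (Real.exp (s - τ) / (1 - a)) with hρ
  have hρcont : Continuous fun s => Real.exp (s - τ) / (1 - a) :=
    (Real.continuous_exp.comp (continuous_id.sub continuous_const)).div_const _
  have hρmeas : AEMeasurable ρ (volume.restrict (Ioc (0:ℝ) τ)) :=
    (continuous_real_toNNReal.comp hρcont).aemeasurable
  have hρnn : ∀ s, 0 ≤ Real.exp (s - τ) / (1 - a) := fun s =>
    div_nonneg (Real.exp_pos _).le h1a.le
  set μ : Measure ℝ := (volume.restrict (Ioc (0:ℝ) τ)).withDensity (fun s => (ρ s : ℝ≥0∞))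
    with hμ
  have hint_exp : ∫ s in (0:ℝ)..τ, Real.exp (s - τ) = 1 - a := by
    have := intervalIntegral.integral_comp_sub_right (a := (0:ℝ)) (b := τ) Real.exp τ
    rw [this, integral_exp]
    simp [ha]
  have hint_ρ : ∫ s in (0:ℝ)..τ, Real.exp (s - τ) / (1 - a) = 1 := by
    rw [intervalIntegral.integral_div, hint_exp, div_self h1a.ne']
  have hρint : IntegrableOn (fun s => Real.exp (s - τ) / (1 - a)) (Ioc (0:ℝ) τ) volume :=
    hρcont.integrableOn_Ioc
  haveI : IsProbabilityMeasure μ := by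
    constructor
    rw [hμ, withDensity_apply _ MeasurableSet.univ, Measure.restrict_univ]
    have hr : (∫⁻ s in Ioc (0:ℝ) τ, (ρ s : ℝ≥0∞))
        = ENNReal.ofReal (∫ s in Ioc (0:ℝ) τ, Real.exp (s - τ) / (1 - a)) :=
      (ofReal_integral_eq_lintegral_ofReal hρint
        (Filter.Eventually.of_forall fun s => hρnn s)).symm
    rw [hr, ← intervalIntegral.integral_of_le h0.le, hint_ρ, ENNReal.ofReal_one]
  have hgint : Integrable g μ := by
    rw [hμ, integrable_withDensity_iff_integrable_smul₀ hρmeas]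
    exact ((NNReal.continuous_coe.comp (continuous_real_toNNReal.comp hρcont)).smul
      hg).integrableOn_Ioc
  have hw : (∫ s, g s ∂μ) ∈ U' :=
    hconv.integral_mem hclosed (Filter.Eventually.of_forall fun s => hgU s) hgint
  set I : E := ∫ s in (0:ℝ)..τ, Real.exp s • g s with hI
  have hw_eq : (∫ s, g s ∂μ) = ((1 - a)⁻¹ * a) • I := by
    rw [hμ, integral_withDensity_eq_integral_smul₀ hρmeas g]
    have hc : ∀ s, ((ρ s : ℝ) • g s) = ((1 - a)⁻¹ * a) • (Real.exp s • g s) := by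
      intro s
      rw [hρ, Real.coe_toNNReal _ (hρnn s), smul_smul]
      congr 1
      have hx : Real.exp (s - τ) = a * Real.exp s := by
        rw [ha, ← Real.exp_add]; congr 1; ring
      rw [hx, div_eq_inv_mul, ← mul_assoc]
    simp_rw [NNReal.smul_def, hc]
    rw [integral_smul, ← intervalIntegral.integral_of_le h0.le]
  have key : a • (u₀ + I) = a • u₀ + (1 - a) • (∫ s, g s ∂μ) := by
    rw [hw_eq, smul_smul, ← mul_assoc, mul_inv_cancel₀ h1a.ne', one_mul, smul_add]
  rw [key]
  exact hconv hu₀ hw ha0.le h1a.le (by ring)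

private lemma exists_sol_interval {E : Type*} [NormedAddCommGroup E] [NormedSpace ℝ E] [CompleteSpace E]
    (Γ : E → E) {K : ℝ} (hK : 0 ≤ K)
    (hlip : ∀ u₁ u₂ : E, ‖u₁‖ ≤ 1 → ‖u₂‖ ≤ 1 → ‖Γ u₁ - Γ u₂‖ ≤ K * ‖u₁ - u₂‖)
    (U' : Set E) (hU'sub : U' ⊆ {u | ‖u‖ ≤ 1}) (hU'closed : IsClosed U')
    (hU'conv : Convex ℝ U') (hU'inv : ∀ u ∈ U', Γ u ∈ U')
    (u₀ : E) (hu₀ : u₀ ∈ U') (T : ℝ) (hT : 0 ≤ T) :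
    ∃ f : ℝ → E, f 0 = u₀ ∧ (∀ t, f t ∈ U') ∧
      ∀ t ∈ Icc (0:ℝ) T, HasDerivWithinAt f (Γ (f t) - f t) (Icc (0:ℝ) T) t := by
  classical
  have hU1 : ∀ u ∈ U', ‖u‖ ≤ 1 := fun u hu => hU'sub hu
  -- Lipschitz continuity of Γ on the unit ball
  have hΓlow : LipschitzOnWith (Real.toNNReal K) Γ {u : E | ‖u‖ ≤ 1} :=
    LipschitzOnWith.of_dist_le_mul fun x hx y hy => by
      rw [dist_eq_norm, dist_eq_norm, Real.coe_toNNReal _ hK]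
      exact hlip x y hx hy
  have hΓcont : ∀ (v : ℝ →ᵇ E), (∀ t, v t ∈ U') → Continuous fun s => Γ (v s) := by
    intro v hv
    rw [← continuousOn_univ]
    exact hΓlow.continuousOn.comp v.continuous.continuousOn fun s _ => hU1 _ (hv s)
  -- the integral maps
  set Fm : (ℝ →ᵇ E) → ℝ → E := fun v τ => ∫ s in (0:ℝ)..τ, Real.exp s • Γ (v s) with hFm
  set Gm : (ℝ →ᵇ E) → ℝ → E := fun v τ => Real.exp (-τ) • (u₀ + Fm v τ) with hGm
  set π : ℝ → ℝ := fun t => min (max t 0) T with hπ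
  have hπ0 : ∀ t, 0 ≤ π t := fun t => le_min (le_max_right t 0) hT
  have hπT : ∀ t, π t ≤ T := fun t => min_le_right _ _
  have hπcont : Continuous π := (continuous_id.max continuous_const).min continuous_const
  have hπid : ∀ t, 0 ≤ t → t ≤ T → π t = t := by
    intro t h1 h2
    simp only [hπ, max_eq_left h1, min_eq_left h2]
  have hπ00 : π 0 = 0 := hπid 0 le_rfl hT
  have hintcont : ∀ (v : ℝ →ᵇ E), (∀ t, v t ∈ U') →
      Continuous fun s => Real.exp s • Γ (v s) := fun v hv =>
    Real.continuous_exp.smul (hΓcont v hv)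
  have hint : ∀ (v : ℝ →ᵇ E), (∀ t, v t ∈ U') → ∀ a b : ℝ,
      IntervalIntegrable (fun s => Real.exp s • Γ (v s)) volume a b := fun v hv a b =>
    (hintcont v hv).intervalIntegrable a b
  have hFd : ∀ (v : ℝ →ᵇ E) (hv : ∀ t, v t ∈ U') (τ : ℝ),
      HasDerivAt (Fm v) (Real.exp τ • Γ (v τ)) τ := by
    intro v hv τ
    exact intervalIntegral.integral_hasDerivAt_right (hint v hv 0 τ)
      ((hintcont v hv).stronglyMeasurable.stronglyMeasurableAtFilter)
      (hintcont v hv).continuousAt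
  have hGd : ∀ (v : ℝ →ᵇ E) (hv : ∀ t, v t ∈ U') (τ : ℝ),
      HasDerivAt (Gm v) (Γ (v τ) - Gm v τ) τ := by
    intro v hv τ
    have h1 : HasDerivAt (fun τ : ℝ => Real.exp (-τ)) (-Real.exp (-τ)) τ := by
      have h := (Real.hasDerivAt_exp (-τ)).comp τ (hasDerivAt_neg τ)
      simp only [mul_neg, mul_one] at h
      exact h
    have h2 : HasDerivAt (fun τ => u₀ + Fm v τ) (Real.exp τ • Γ (v τ)) τ :=
      (hFd v hv τ).const_add u₀
    have h3 := h1.smul h2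
    convert h3 using 1
    · rfl
    rw [smul_smul, ← Real.exp_add, neg_add_cancel, Real.exp_zero, one_smul, neg_smul]
    abel
  have hGcont : ∀ (v : ℝ →ᵇ E) (hv : ∀ t, v t ∈ U'), Continuous (Gm v) := by
    intro v hv
    exact continuous_iff_continuousAt.2 fun τ => (hGd v hv τ).continuousAt
  have hGmem : ∀ (v : ℝ →ᵇ E) (hv : ∀ t, v t ∈ U') (τ : ℝ), 0 ≤ τ → Gm v τ ∈ U' := by
    intro v hv τ hτ
    exact aux_mem hU'conv hU'closed hu₀ (hΓcont v hv) (fun s => hU'inv _ (hv s)) hτ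
  -- the complete space of curves with values in U'
  set S : Set (ℝ →ᵇ E) := {v | ∀ t, v t ∈ U'} with hS
  have hSc : IsClosed S := by
    have : S = ⋂ t : ℝ, (fun v : ℝ →ᵇ E => v t) ⁻¹' U' := by
      ext v; simp [hS, Set.mem_iInter]
    rw [this]
    exact isClosed_iInter fun t =>
      hU'closed.preimage (continuous_eval_const t)
  haveI := hSc.completeSpace_coe
  haveI : Nonempty S := ⟨⟨BoundedContinuousFunction.const ℝ u₀, fun t => hu₀⟩⟩
  -- the Picard map
  set Tmap : S → S := fun v =>
    ⟨BoundedContinuousFunction.ofNormedAddCommGroup (fun t => Gm v.1 (π t))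
      ((hGcont v.1 v.2).comp hπcont) 1
      (fun t => hU1 _ (hGmem v.1 v.2 (π t) (hπ0 t))),
     fun t => hGmem v.1 v.2 (π t) (hπ0 t)⟩ with hTmap
  have hTapp : ∀ (v : S) (t : ℝ), (Tmap v).1 t = Gm v.1 (π t) := fun v t => rfl
  -- iterated contraction estimate
  have step : ∀ (n : ℕ) (v w : S) (t : ℝ),
      ‖(Tmap^[n] v).1 t - (Tmap^[n] w).1 t‖
        ≤ K ^ n * (π t) ^ n / (n.factorial : ℝ) * dist v w := by
    intro n
    induction n with
    | zero =>
      intro v w t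
      simp only [Function.iterate_zero_apply, pow_zero, Nat.factorial_zero, Nat.cast_one,
        one_mul, mul_one, div_one]
      rw [← dist_eq_norm]
      exact (BoundedContinuousFunction.dist_coe_le_dist t).trans_eq (Subtype.dist_eq v w).symm
    | succ n ih =>
      intro v w t
      set a : S := Tmap^[n] v with haS
      set b : S := Tmap^[n] w with hbS
      rw [Function.iterate_succ_apply', Function.iterate_succ_apply', ← haS, ← hbS]
      rw [hTapp, hTapp]
      set τ : ℝ := π t with hτdef
      have hτ0 : 0 ≤ τ := hπ0 t
      have hτT : τ ≤ T := hπT t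
      set D : ℝ := dist v w with hD
      have hD0 : 0 ≤ D := dist_nonneg
      have hsub : Gm a.1 τ - Gm b.1 τ
          = Real.exp (-τ) • (Fm a.1 τ - Fm b.1 τ) := by
        simp only [hGm]
        rw [← smul_sub]
        congr 1
        abel
      have hsub2 : Fm a.1 τ - Fm b.1 τ
          = ∫ s in (0:ℝ)..τ, (Real.exp s • Γ (a.1 s) - Real.exp s • Γ (b.1 s)) :=
        (intervalIntegral.integral_sub (hint a.1 a.2 0 τ) (hint b.1 b.2 0 τ)).symm
      have hptwise : ∀ s ∈ Icc (0:ℝ) τ,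
          ‖Real.exp s • Γ (a.1 s) - Real.exp s • Γ (b.1 s)‖
            ≤ Real.exp s * (K * (K ^ n * s ^ n / (n.factorial : ℝ) * D)) := by
        intro s hs
        rw [← smul_sub, norm_smul, Real.norm_of_nonneg (Real.exp_pos s).le]
        have h1 : ‖Γ (a.1 s) - Γ (b.1 s)‖ ≤ K * ‖a.1 s - b.1 s‖ :=
          hlip _ _ (hU1 _ (a.2 s)) (hU1 _ (b.2 s))
        have h2 := ih v w s
        rw [hπid s hs.1 (hs.2.trans hτT)] at h2
        have h3 : ‖a.1 s - b.1 s‖ ≤ K ^ n * s ^ n / (n.factorial : ℝ) * D := h2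
        exact mul_le_mul_of_nonneg_left
          (h1.trans (mul_le_mul_of_nonneg_left h3 hK)) (Real.exp_pos s).le
      have hnormint : ‖Gm a.1 τ - Gm b.1 τ‖
          ≤ Real.exp (-τ) * ∫ s in (0:ℝ)..τ,
              Real.exp s * (K * (K ^ n * s ^ n / (n.factorial : ℝ) * D)) := by
        rw [hsub, norm_smul, Real.norm_of_nonneg (Real.exp_pos _).le, hsub2]
        refine mul_le_mul_of_nonneg_left ?_ (Real.exp_pos _).le
        refine (intervalIntegral.norm_integral_le_integral_norm hτ0).trans ?_
        refine intervalIntegral.integral_mono_on hτ0 ?_ ?_ hptwise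
        · exact (((hintcont a.1 a.2).sub (hintcont b.1 b.2)).norm).intervalIntegrable 0 τ
        · exact (Continuous.intervalIntegrable (by fun_prop) 0 τ)
      have hbound2 : (∫ s in (0:ℝ)..τ,
            Real.exp s * (K * (K ^ n * s ^ n / (n.factorial : ℝ) * D)))
          ≤ ∫ s in (0:ℝ)..τ,
            Real.exp τ * (K * (K ^ n * s ^ n / (n.factorial : ℝ) * D)) := by
        refine intervalIntegral.integral_mono_on hτ0 ?_ ?_ ?_
        · exact (Continuous.intervalIntegrable (by fun_prop) 0 τ)
        · exact (Continuous.intervalIntegrable (by fun_prop) 0 τ)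
        · intro s hs
          have h1 : Real.exp s ≤ Real.exp τ := Real.exp_le_exp.2 hs.2
          have h2 : 0 ≤ K * (K ^ n * s ^ n / (n.factorial : ℝ) * D) := by
            have : (0:ℝ) ≤ s ^ n := pow_nonneg hs.1 n
            positivity
          exact mul_le_mul_of_nonneg_right h1 h2
      have hintval : (∫ s in (0:ℝ)..τ,
            Real.exp τ * (K * (K ^ n * s ^ n / (n.factorial : ℝ) * D)))
          = Real.exp τ * (K * (K ^ n / (n.factorial : ℝ) * D)) * (τ ^ (n + 1) / (n + 1)) := by
        have hrw : ∀ s : ℝ, Real.exp τ * (K * (K ^ n * s ^ n / (n.factorial : ℝ) * D))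
            = (Real.exp τ * (K * (K ^ n / (n.factorial : ℝ) * D))) * s ^ n := by
          intro s; ring
        simp_rw [hrw]
        rw [intervalIntegral.integral_const_mul, integral_pow]
        ring
      refine (hnormint.trans (mul_le_mul_of_nonneg_left hbound2 (Real.exp_pos _).le)).trans ?_
      rw [hintval, ← mul_assoc, ← mul_assoc, ← Real.exp_add, neg_add_cancel, Real.exp_zero]
      have hfact : ((n + 1).factorial : ℝ) = ((n:ℝ) + 1) * (n.factorial : ℝ) := by
        rw [Nat.factorial_succ]; push_cast; ring
      rw [hfact]
      have h1 : ((n:ℝ) + 1) ≠ 0 := by positivity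
      have h2 : (n.factorial : ℝ) ≠ 0 := by positivity
      apply le_of_eq
      field_simp
      ring
  -- Lipschitz bound for the iterates
  have hdist : ∀ (n : ℕ) (v w : S),
      dist (Tmap^[n] v) (Tmap^[n] w) ≤ (K * T) ^ n / (n.factorial : ℝ) * dist v w := by
    intro n v w
    rw [Subtype.dist_eq]
    refine (BoundedContinuousFunction.dist_le (by positivity)).2 fun t => ?_
    rw [dist_eq_norm]
    refine (step n v w t).trans ?_
    have h1 : K ^ n * (π t) ^ n ≤ (K * T) ^ n := by
      rw [← mul_pow]
      exact pow_le_pow_left₀ (mul_nonneg hK (hπ0 t))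
        (mul_le_mul_of_nonneg_left (hπT t) hK) n
    have h2 : K ^ n * (π t) ^ n / (n.factorial : ℝ) ≤ (K * T) ^ n / (n.factorial : ℝ) :=
      (div_le_div_iff_of_pos_right (by positivity)).2 h1
    exact mul_le_mul_of_nonneg_right h2 dist_nonneg
  -- a contracting iterate
  obtain ⟨n, hn⟩ : ∃ n : ℕ, (K * T) ^ n / (n.factorial : ℝ) < 1 := by
    have h := FloorSemiring.tendsto_pow_div_factorial_atTop (K * T)
    exact (h.eventually_lt_const one_pos).exists
  have hnn : 0 ≤ (K * T) ^ n / (n.factorial : ℝ) := by positivity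
  set c : ℝ≥0 := Real.toNNReal ((K * T) ^ n / (n.factorial : ℝ)) with hc
  have hc1 : c < 1 := by
    rw [← NNReal.coe_lt_coe, hc, Real.coe_toNNReal _ hnn]
    exact_mod_cast hn
  have hcontr : ContractingWith c (Tmap^[n]) := by
    refine ⟨hc1, LipschitzWith.of_dist_le_mul fun v w => ?_⟩
    rw [hc, Real.coe_toNNReal _ hnn]
    exact hdist n v w
  set vf : S := ContractingWith.fixedPoint (Tmap^[n]) hcontr with hvfdef
  have hvf : Tmap vf = vf := ContractingWith.isFixedPt_fixedPoint_iterate hcontr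
  have hfix : ∀ t, vf.1 t = Gm vf.1 (π t) := by
    intro t
    conv_lhs => rw [← hvf]
    exact hTapp vf t
  refine ⟨fun t => vf.1 t, ?_, fun t => vf.2 t, ?_⟩
  · show vf.1 0 = u₀
    rw [hfix 0, hπ00, hGm]
    simp [hFm, intervalIntegral.integral_same]
  · intro t ht
    have hG := hGd vf.1 vf.2 t
    have heq : ∀ s ∈ Icc (0:ℝ) T, vf.1 s = Gm vf.1 s := by
      intro s hs
      rw [hfix s, hπid s hs.1 hs.2]
    have h1 : HasDerivWithinAt (fun s : ℝ => vf.1 s) (Γ (vf.1 t) - Gm vf.1 t) (Icc 0 T) t :=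
      (hG.hasDerivWithinAt).congr heq (heq t ht)
    have h2 : Γ (vf.1 t) - Gm vf.1 t = Γ (vf.1 t) - vf.1 t := by rw [← heq t ht]
    rw [h2] at h1
    exact h1


/-- `u : ℝ → B` is a solution of `u_t + u = Γ(u)` on `[0,∞)`. -/
def IsSol (Γ : BoundedContinuousFunction ℝ≥0 ℂ → BoundedContinuousFunction ℝ≥0 ℂ)
    (u : ℝ → BoundedContinuousFunction ℝ≥0 ℂ) : Prop :=
  ∀ t : ℝ, 0 ≤ t → HasDerivWithinAt u (Γ (u t) - u t) (Set.Ici 0) t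

/-- The pointwise absolute value `|f|` of `f ∈ B`, as an element of `B`. -/
noncomputable def absB (f : BoundedContinuousFunction ℝ≥0 ℂ) :
    BoundedContinuousFunction ℝ≥0 ℂ :=
  BoundedContinuousFunction.ofNormedAddCommGroup (fun x => (‖f x‖ : ℂ))
    (Complex.continuous_ofReal.comp f.continuous.norm) ‖f‖
    (fun x => by simpa using f.norm_coe_le_norm x)

/-- `f ∈ B` is a nonnegative (real-valued) function. -/
def NonnegF (f : BoundedContinuousFunction ℝ≥0 ℂ) : Prop :=
  ∀ x, (f x).im = 0 ∧ 0 ≤ (f x).re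

theorem stmt_3
    (Γ : BoundedContinuousFunction ℝ≥0 ℂ → BoundedContinuousFunction ℝ≥0 ℂ)
    (L : BoundedContinuousFunction ℝ≥0 ℂ →L[ℂ] BoundedContinuousFunction ℝ≥0 ℂ)
    (hLpos : ∀ f, NonnegF f → NonnegF (L f))
    -- (b) Γ is L-Lipschitz on the unit ball U
    (hb : ∀ u₁ u₂ : BoundedContinuousFunction ℝ≥0 ℂ, ‖u₁‖ ≤ 1 → ‖u₂‖ ≤ 1 →
      ∀ x : ℝ≥0, ‖Γ u₁ x - Γ u₂ x‖ ≤ ((L (absB (u₁ - u₂))) x).re)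
    -- U′ is a closed convex subset of the unit ball, invariant under Γ
    (U' : Set (BoundedContinuousFunction ℝ≥0 ℂ))
    (hU'sub : U' ⊆ {u | ‖u‖ ≤ 1}) (hU'closed : IsClosed U') (hU'conv : Convex ℝ U')
    (hU'inv : ∀ u ∈ U', Γ u ∈ U')
    (u₀ : BoundedContinuousFunction ℝ≥0 ℂ) (hu₀ : u₀ ∈ U') :
    -- existence of a solution staying in U′ …
    (∃ u : ℝ → BoundedContinuousFunction ℝ≥0 ℂ,
      IsSol Γ u ∧ u 0 = u₀ ∧ ∀ t : ℝ, 0 ≤ t → u t ∈ U') ∧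
    -- … unique in the class of solutions staying in U′
    (∀ u w : ℝ → BoundedContinuousFunction ℝ≥0 ℂ, IsSol Γ u → IsSol Γ w →
      (∀ t : ℝ, 0 ≤ t → u t ∈ U') → (∀ t : ℝ, 0 ≤ t → w t ∈ U') →
      u 0 = u₀ → w 0 = u₀ → ∀ t : ℝ, 0 ≤ t → u t = w t) := by
  classical
  have hlip : ∀ u₁ u₂ : BoundedContinuousFunction ℝ≥0 ℂ, ‖u₁‖ ≤ 1 → ‖u₂‖ ≤ 1 →
      ‖Γ u₁ - Γ u₂‖ ≤ ‖L‖ * ‖u₁ - u₂‖ := by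
    intro u₁ u₂ h₁ h₂
    refine (BoundedContinuousFunction.norm_le (by positivity)).2 fun x => ?_
    calc ‖(Γ u₁ - Γ u₂) x‖ = ‖Γ u₁ x - Γ u₂ x‖ := by
          rw [BoundedContinuousFunction.coe_sub, Pi.sub_apply]
      _ ≤ ((L (absB (u₁ - u₂))) x).re := hb u₁ u₂ h₁ h₂ x
      _ ≤ ‖(L (absB (u₁ - u₂))) x‖ := by
          refine (Complex.re_le_norm _).trans ?_
          exact le_rfl
      _ ≤ ‖L (absB (u₁ - u₂))‖ := BoundedContinuousFunction.norm_coe_le_norm _ x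
      _ ≤ ‖L‖ * ‖absB (u₁ - u₂)‖ := L.le_opNorm _
      _ ≤ ‖L‖ * ‖u₁ - u₂‖ := by
          refine mul_le_mul_of_nonneg_left ?_ (norm_nonneg _)
          exact BoundedContinuousFunction.norm_ofNormedAddCommGroup_le _ (norm_nonneg _) _
  -- Lipschitz property of the vector field on U'
  have hVlip : LipschitzOnWith (‖L‖₊ + 1)
      (fun y : BoundedContinuousFunction ℝ≥0 ℂ => Γ y - y) U' := by
    apply LipschitzOnWith.of_dist_le_mul
    intro x hx y hy
    rw [dist_eq_norm, dist_eq_norm]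
    have hre : Γ x - x - (Γ y - y) = Γ x - Γ y - (x - y) := by abel
    calc ‖Γ x - x - (Γ y - y)‖ = ‖Γ x - Γ y - (x - y)‖ := by rw [hre]
      _ ≤ ‖Γ x - Γ y‖ + ‖x - y‖ := norm_sub_le _ _
      _ ≤ ‖L‖ * ‖x - y‖ + ‖x - y‖ :=
          add_le_add (hlip x y (hU'sub hx) (hU'sub hy)) le_rfl
      _ = (↑(‖L‖₊ + 1) : ℝ) * ‖x - y‖ := by
          push_cast
          ring
  -- uniqueness on finite intervals, via Grönwall
  have uniqOn : ∀ (f g : ℝ → BoundedContinuousFunction ℝ≥0 ℂ) (T : ℝ), 0 ≤ T →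
      (∀ r, 0 ≤ r → r < T → HasDerivWithinAt f (Γ (f r) - f r) (Ici r) r) →
      (∀ r, 0 ≤ r → f r ∈ U') → ContinuousOn f (Icc 0 T) →
      (∀ r, 0 ≤ r → r < T → HasDerivWithinAt g (Γ (g r) - g r) (Ici r) r) →
      (∀ r, 0 ≤ r → g r ∈ U') → ContinuousOn g (Icc 0 T) →
      f 0 = g 0 → ∀ t, 0 ≤ t → t ≤ T → f t = g t := by
    intro f g T hT hf' hfU hfc hg' hgU hgc h0 t ht0 htT
    have h := ODE_solution_unique_of_mem_Icc_right
      (v := fun _ y => Γ y - y) (s := fun _ => U') (K := ‖L‖₊ + 1) (a := 0) (b := T)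
      (fun _ _ => hVlip) hfc (fun r hr => hf' r hr.1 hr.2) (fun r hr => hfU r hr.1)
      hgc (fun r hr => hg' r hr.1 hr.2) (fun r hr => hgU r hr.1) h0
    exact h ⟨ht0, htT⟩
  -- existence on [0, n+1] for every n
  have hexist : ∀ n : ℕ, ∃ f : ℝ → BoundedContinuousFunction ℝ≥0 ℂ,
      f 0 = u₀ ∧ (∀ t, f t ∈ U') ∧
      ∀ t ∈ Icc (0:ℝ) ((n:ℝ)+1), HasDerivWithinAt f (Γ (f t) - f t) (Icc (0:ℝ) ((n:ℝ)+1)) t :=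
    fun n => exists_sol_interval Γ (norm_nonneg L) hlip U' hU'sub hU'closed hU'conv hU'inv
      u₀ hu₀ ((n:ℝ)+1) (by positivity)
  choose sol hsol0 hsolU hsolD using hexist
  have hsolIci : ∀ (n : ℕ) (r : ℝ), 0 ≤ r → r < (n:ℝ)+1 →
      HasDerivWithinAt (sol n) (Γ (sol n r) - sol n r) (Ici r) r := by
    intro n r h0 h1
    exact (hsolD n r ⟨h0, h1.le⟩).mono_of_mem_nhdsWithin (Icc_mem_nhdsGE_of_mem ⟨h0, h1⟩)
  have hsolCont : ∀ n : ℕ, ContinuousOn (sol n) (Icc (0:ℝ) ((n:ℝ)+1)) :=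
    fun n r hr => (hsolD n r hr).continuousWithinAt
  have compat : ∀ (m n : ℕ) (s : ℝ), 0 ≤ s → s ≤ (m:ℝ)+1 → s ≤ (n:ℝ)+1 →
      sol m s = sol n s := by
    intro m n s h0 hm hn
    refine uniqOn (sol m) (sol n) (min ((m:ℝ)+1) ((n:ℝ)+1))
      (le_min (by positivity) (by positivity))
      (fun r hr0 hrT => hsolIci m r hr0 (hrT.trans_le (min_le_left _ _)))
      (fun r _ => hsolU m r)
      ((hsolCont m).mono (Icc_subset_Icc le_rfl (min_le_left _ _)))
      (fun r hr0 hrT => hsolIci n r hr0 (hrT.trans_le (min_le_right _ _)))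
      (fun r _ => hsolU n r)
      ((hsolCont n).mono (Icc_subset_Icc le_rfl (min_le_right _ _)))
      (by rw [hsol0 m, hsol0 n]) s h0 (le_min hm hn)
  set u : ℝ → BoundedContinuousFunction ℝ≥0 ℂ := fun t => sol ⌈t⌉₊ t with hu_def
  have hu0 : u 0 = u₀ := by
    have : (⌈(0:ℝ)⌉₊ : ℕ) = 0 := by simp
    rw [hu_def]
    simp only [this]
    exact hsol0 0
  have huU : ∀ t : ℝ, u t ∈ U' := fun t => hsolU _ t
  have huSol : IsSol Γ u := by
    intro t ht
    set n : ℕ := ⌈t⌉₊ with hn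
    have htn : t < (n:ℝ)+1 := lt_of_le_of_lt (Nat.le_ceil t) (by linarith)
    have hD : HasDerivWithinAt (sol n) (Γ (sol n t) - sol n t) (Ici 0) t := by
      refine (hsolD n t ⟨ht, htn.le⟩).mono_of_mem_nhdsWithin ?_
      rw [mem_nhdsWithin]
      exact ⟨Iio ((n:ℝ)+1), isOpen_Iio, htn, fun s hs => ⟨hs.2, hs.1.le⟩⟩
    have hueq : ∀ s ∈ Iio ((n:ℝ)+1) ∩ Ici (0:ℝ), u s = sol n s := by
      intro s hs
      exact compat ⌈s⌉₊ n s hs.2 ((Nat.le_ceil s).trans (by linarith)) hs.1.le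
    have hmem : Iio ((n:ℝ)+1) ∩ Ici (0:ℝ) ∈ 𝓝[Ici (0:ℝ)] t :=
      inter_mem (mem_nhdsWithin_of_mem_nhds (Iio_mem_nhds htn)) self_mem_nhdsWithin
    have hev : u =ᶠ[𝓝[Ici (0:ℝ)] t] sol n := eventuallyEq_of_mem hmem hueq
    have hut : u t = sol n t := rfl
    have hres := hD.congr_of_eventuallyEq hev hut
    rw [show Γ (u t) - u t = Γ (sol n t) - sol n t by rw [hut]]
    exact hres
  refine ⟨⟨u, huSol, hu0, fun t _ => huU t⟩, ?_⟩
  intro f g hf hg hfU hgU hf0 hg0 t ht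
  refine uniqOn f g t ht
    (fun r h0 _ => (hf r h0).mono (Ici_subset_Ici.2 h0))
    (fun r h0 => hfU r h0)
    (fun r hr => ((hf r hr.1).continuousWithinAt).mono fun s hs => hs.1)
    (fun r h0 _ => (hg r h0).mono (Ici_subset_Ici.2 h0))
    (fun r h0 => hgU r h0)
    (fun r hr => ((hg r hr.1).continuousWithinAt).mono fun s hs => hs.1)
    (by rw [hf0, hg0]) t ht le_rfl
end

section
/- Assume N ≥ 2, α_N > 0, and K({0}) = 0. Then the spectral function μ is differentiable on (0,∞) and has at most one critical point: there is at most one p₀ ∈ (0,∞) with μ′(p₀) = 0. If such a p₀ exists, then μ(p₀) ≤ μ(p) for all p > 0 and μ is strictly decreasing on (0, p₀); if no critical point exists, μ is strictly decreasing on all of (0,∞). Consequently (setting p₀ = ∞ in the latter case), μ restricted to (0, p₀) is a strictly decreasing bijection onto (inf_{q>0} μ(q), +∞), and hence has a strictly decreasing inverse function p(·) : (inf_{q>0} μ(q), +∞) → (0, p₀). -/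
/- STATEMENT 8: For N ≥ 2, α_N > 0, K({0}) = 0: μ is differentiable on (0,∞) with at most one
critical point p₀; if p₀ exists it is the global minimum point and μ is strictly decreasing on
(0,p₀); otherwise μ is strictly decreasing on (0,∞). In either case μ restricted to (0,p₀)
(resp. (0,∞)) is a strictly decreasing bijection onto (inf_{q>0} μ(q), ∞), with strictly
decreasing inverse. -/

open MeasureTheory Filter Set
open scoped NNReal ENNReal BigOperators Topology

/-- The measure `K = Σₙ n αₙ Kₙ`, `Kₙ` the first marginal of `Aₙ` (arities `1,…,N`). -/
noncomputable def Kmeas {N : ℕ} (α : Fin N → ℝ)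
    (A : (n : Fin N) → Measure (Fin ((n : ℕ) + 1) → ℝ≥0)) : Measure ℝ≥0 :=
  ∑ n : Fin N, (((n : ℕ) + 1 : ℝ≥0∞) * ENNReal.ofReal (α n)) •
    ((A n).map (fun a => a 0))

/-- `λ(p) = ∫ a^p dK(a)`. -/
noncomputable def lamK (K : Measure ℝ≥0) (p : ℝ) : ℝ := ∫ a, (a : ℝ) ^ p ∂K

/-- The spectral function `μ(p) = (λ(p) − 1)/p`. -/
noncomputable def muK (K : Measure ℝ≥0) (p : ℝ) : ℝ := (lamK K p - 1) / p


lemma neg_log_le {l a : ℝ} (hl : 0 < l) (ha : 0 < a) :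
    -Real.log a ≤ (2 / l) * a ^ (-(l/2)) := by
  have h := Real.log_le_sub_one_of_pos (Real.rpow_pos_of_pos ha (-(l/2)))
  rw [Real.log_rpow ha] at h
  have h2 : -(l/2) * Real.log a ≤ a ^ (-(l/2)) := by nlinarith [Real.rpow_pos_of_pos ha (-(l/2))]
  rw [div_mul_eq_mul_div, le_div_iff₀ hl]
  nlinarith

lemma bound_pow_log {l u p a R : ℝ} (hl : 0 < l) (hp : l ≤ p) (hpu : p ≤ u)
    (ha : 0 < a) (haR : a ≤ R) (hR : 1 ≤ R) :
    |a ^ p * Real.log a| ≤ 2 / l + R ^ u * Real.log R := by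
  have hRu : (0:ℝ) ≤ R ^ u * Real.log R :=
    mul_nonneg (Real.rpow_nonneg (by linarith) u) (Real.log_nonneg hR)
  have h2l : (0:ℝ) ≤ 2 / l := by positivity
  rcases le_or_gt a 1 with h1 | h1
  · have hlog : Real.log a ≤ 0 := Real.log_nonpos ha.le h1
    have habs : |a ^ p * Real.log a| = a ^ p * (-Real.log a) := by
      rw [abs_of_nonpos (mul_nonpos_of_nonneg_of_nonpos (Real.rpow_nonneg ha.le p) hlog)]; ring
    have hb := neg_log_le hl ha
    have hppos := Real.rpow_nonneg ha.le p
    have key : a ^ p * (-Real.log a) ≤ (2/l) * (a ^ p * a ^ (-(l/2))) := by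
      have h3 := mul_le_mul_of_nonneg_left hb hppos
      nlinarith
    have hcom : a ^ p * a ^ (-(l/2)) = a ^ (p - l/2) := by
      rw [← Real.rpow_add ha]; ring_nf
    have hle1 : a ^ (p - l/2) ≤ 1 := Real.rpow_le_one ha.le h1 (by linarith)
    rw [habs]
    calc a ^ p * (-Real.log a) ≤ (2/l) * (a ^ p * a ^ (-(l/2))) := key
      _ = (2/l) * a ^ (p - l/2) := by rw [hcom]
      _ ≤ (2/l) * 1 := mul_le_mul_of_nonneg_left hle1 h2l
      _ ≤ 2 / l + R ^ u * Real.log R := by linarith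
  · have hlog : 0 ≤ Real.log a := Real.log_nonneg h1.le
    have hap : a ^ p ≤ R ^ u :=
      le_trans (Real.rpow_le_rpow_of_exponent_le h1.le hpu)
        (Real.rpow_le_rpow (by linarith) haR (by linarith))
    have hloga : Real.log a ≤ Real.log R := Real.log_le_log ha haR
    have habs : |a ^ p * Real.log a| = a ^ p * Real.log a :=
      abs_of_nonneg (mul_nonneg (Real.rpow_nonneg ha.le p) hlog)
    rw [habs]
    have := mul_le_mul hap hloga hlog (Real.rpow_nonneg (by linarith) u)
    linarith


noncomputable def lamK' (K : Measure ℝ≥0) (p : ℝ) : ℝ := ∫ a, (a : ℝ) ^ p * Real.log a ∂K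
noncomputable def phiK (K : Measure ℝ≥0) (p : ℝ) : ℝ := p * lamK' K p - lamK K p + 1

section meas
variable {K : Measure ℝ≥0} [IsFiniteMeasure K] {R : ℝ≥0}

lemma Kae (hz : K {0} = 0) (hR : K {a : ℝ≥0 | R < a} = 0) :
    ∀ᵐ a : ℝ≥0 ∂K, 0 < (a:ℝ) ∧ (a:ℝ) ≤ (R:ℝ) := by
  have h1 : ∀ᵐ a ∂K, a ≠ 0 := by
    rw [ae_iff]; convert hz using 2; ext a; simp
  have h2 : ∀ᵐ a ∂K, ¬ ((R:ℝ≥0) < a) := by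
    rw [ae_iff]; convert hR using 2; ext a; simp
  filter_upwards [h1, h2] with a ha hb
  exact ⟨by exact_mod_cast ha.bot_lt, by exact_mod_cast not_lt.1 hb⟩

lemma meas_pow (p : ℝ) : Measurable fun a : ℝ≥0 => (a:ℝ) ^ p := by
  measurability

lemma meas_powlog (p : ℝ) : Measurable fun a : ℝ≥0 => (a:ℝ) ^ p * Real.log a := by
  measurability

lemma integrable_bd (hz : K {0} = 0) (hR : K {a : ℝ≥0 | R < a} = 0)
    {f : ℝ≥0 → ℝ} (hm : AEStronglyMeasurable f K) {C : ℝ}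
    (hC : ∀ a : ℝ≥0, 0 < (a:ℝ) → (a:ℝ) ≤ (R:ℝ) → ‖f a‖ ≤ C) : Integrable f K :=
  (integrable_const C).mono' hm ((Kae hz hR).mono fun a ha => hC a ha.1 ha.2)

lemma int_pow (hz : K {0} = 0) (hR : K {a : ℝ≥0 | R < a} = 0) (hR1 : 1 ≤ (R:ℝ))
    {p : ℝ} (hp : 0 ≤ p) : Integrable (fun a : ℝ≥0 => (a:ℝ) ^ p) K := by
  refine integrable_bd hz hR (meas_pow p).aestronglyMeasurable (C := (R:ℝ) ^ p) ?_
  intro a ha haR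
  rw [Real.norm_eq_abs, abs_of_nonneg (Real.rpow_nonneg ha.le p)]
  exact Real.rpow_le_rpow ha.le haR hp

lemma int_powlog (hz : K {0} = 0) (hR : K {a : ℝ≥0 | R < a} = 0) (hR1 : 1 ≤ (R:ℝ))
    {p : ℝ} (hp : 0 < p) :
    Integrable (fun a : ℝ≥0 => (a:ℝ) ^ p * Real.log a) K := by
  refine integrable_bd hz hR (meas_powlog p).aestronglyMeasurable
    (C := 2 / p + (R:ℝ) ^ p * Real.log R) ?_
  intro a ha haR
  exact bound_pow_log hp le_rfl le_rfl ha haR hR1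

lemma lamK_hasDerivAt (hz : K {0} = 0) (hR : K {a : ℝ≥0 | R < a} = 0) (hR1 : 1 ≤ (R:ℝ))
    {p : ℝ} (hp : 0 < p) : HasDerivAt (lamK K) (lamK' K p) p := by
  have key := hasDerivAt_integral_of_dominated_loc_of_deriv_le (μ := K)
    (F := fun x (a : ℝ≥0) => (a:ℝ) ^ x) (F' := fun x (a : ℝ≥0) => (a:ℝ) ^ x * Real.log a)
    (x₀ := p) (s := Metric.ball p (p/2))
    (bound := fun _ => 2 / (p/2) + (R:ℝ) ^ (p + p/2) * Real.log R)
    (Metric.ball_mem_nhds p (by positivity))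
    (Eventually.of_forall fun x => (meas_pow x).aestronglyMeasurable)
    (int_pow hz hR hR1 hp.le)
    (meas_powlog p).aestronglyMeasurable
    ?_ (integrable_const _) ?_
  · exact key.2
  · filter_upwards [Kae hz hR] with a ha x hx
    rw [Real.ball_eq_Ioo] at hx
    exact bound_pow_log (by positivity) (by linarith [hx.1]) (by linarith [hx.2]) ha.1 ha.2 hR1
  · filter_upwards [Kae hz hR] with a ha x _
    exact (Real.hasStrictDerivAt_const_rpow ha.1 x).hasDerivAt

lemma lamK'_continuousAt (hz : K {0} = 0) (hR : K {a : ℝ≥0 | R < a} = 0) (hR1 : 1 ≤ (R:ℝ))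
    {p : ℝ} (hp : 0 < p) : ContinuousAt (lamK' K) p := by
  rw [ContinuousAt]
  apply tendsto_integral_filter_of_dominated_convergence
    (bound := fun _ => 2 / (p/2) + (R:ℝ) ^ (p + p/2) * Real.log R)
  · exact Eventually.of_forall fun x => (meas_powlog x).aestronglyMeasurable
  · filter_upwards [Metric.ball_mem_nhds p (by positivity : (0:ℝ) < p/2)] with x hx
    filter_upwards [Kae hz hR] with a ha
    rw [Real.ball_eq_Ioo] at hx
    exact bound_pow_log (by positivity) (by linarith [hx.1]) (by linarith [hx.2]) ha.1 ha.2 hR1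
  · exact integrable_const _
  · filter_upwards [Kae hz hR] with a ha
    exact (((Real.hasStrictDerivAt_const_rpow ha.1 p).hasDerivAt.continuousAt).mul
      continuousAt_const).tendsto

lemma lamK_tendsto_zero (hz : K {0} = 0) (hR : K {a : ℝ≥0 | R < a} = 0) (hR1 : 1 ≤ (R:ℝ)) :
    Tendsto (lamK K) (𝓝[>] 0) (𝓝 ((K univ).toReal)) := by
  have h0 : (K univ).toReal = ∫ _a, (1:ℝ) ∂K := by
    simp [integral_const, smul_eq_mul, measureReal_def]
  rw [h0]
  apply tendsto_integral_filter_of_dominated_convergence (bound := fun _ => max 1 (R:ℝ))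
  · exact Eventually.of_forall fun x => (meas_pow x).aestronglyMeasurable
  · filter_upwards [Ioc_mem_nhdsGT (zero_lt_one)] with x hx
    filter_upwards [Kae hz hR] with a ha
    rw [Real.norm_eq_abs, abs_of_nonneg (Real.rpow_nonneg ha.1.le x)]
    rcases le_or_gt (a:ℝ) 1 with h1 | h1
    · exact le_max_of_le_left (Real.rpow_le_one ha.1.le h1 hx.1.le)
    · refine le_max_of_le_right ?_
      calc (a:ℝ) ^ x ≤ (a:ℝ) ^ (1:ℝ) := Real.rpow_le_rpow_of_exponent_le h1.le hx.2
        _ = (a:ℝ) := Real.rpow_one _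
        _ ≤ (R:ℝ) := ha.2
  · exact integrable_const _
  · filter_upwards [Kae hz hR] with a ha
    have : ContinuousAt (fun x : ℝ => (a:ℝ) ^ x) 0 :=
      (Real.hasStrictDerivAt_const_rpow ha.1 0).hasDerivAt.continuousAt
    have h2 : Tendsto (fun x : ℝ => (a:ℝ) ^ x) (𝓝[>] 0) (𝓝 ((a:ℝ) ^ (0:ℝ))) :=
      this.tendsto.mono_left nhdsWithin_le_nhds
    simpa [Real.rpow_zero] using h2

end meas


lemma H_hasDeriv {b : ℝ} (hb : 0 < b) (t : ℝ) :
    HasDerivAt (fun t => t * b ^ t * Real.log b - b ^ t)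
      (t * b ^ t * (Real.log b) ^ 2) t := by
  have h1 := (Real.hasStrictDerivAt_const_rpow hb t).hasDerivAt
  have h2 := (hasDerivAt_id t).mul h1
  have h3 := h2.mul_const (Real.log b)
  have h4 := h3.sub h1
  refine h4.congr_deriv ?_
  show (1 * b ^ t + t * (b ^ t * Real.log b)) * Real.log b - b ^ t * Real.log b = t * b ^ t * Real.log b ^ 2
  ring

/-- The key integrand `H q − H p` is nonnegative, and positive unless `b = 1`. -/
lemma H_mono {b p q : ℝ} (hb : 0 < b) (hp : 0 < p) (hpq : p ≤ q) :
    p * b ^ p * Real.log b - b ^ p ≤ q * b ^ q * Real.log b - b ^ q := by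
  have hmono : MonotoneOn (fun t => t * b ^ t * Real.log b - b ^ t) (Icc p q) := by
    apply monotoneOn_of_deriv_nonneg (convex_Icc p q)
    · exact fun x _ => ((H_hasDeriv hb x).continuousAt).continuousWithinAt
    · intro x hx
      exact (H_hasDeriv hb x).differentiableAt.differentiableWithinAt
    · intro x hx
      rw [interior_Icc] at hx
      rw [(H_hasDeriv hb x).deriv]
      have hx0 : 0 < x := hp.trans hx.1
      positivity
  exact hmono (left_mem_Icc.2 hpq) (right_mem_Icc.2 hpq) hpq

lemma H_strict {b p q : ℝ} (hb : 0 < b) (hb1 : b ≠ 1) (hp : 0 < p) (hpq : p < q) :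
    p * b ^ p * Real.log b - b ^ p < q * b ^ q * Real.log b - b ^ q := by
  have hlog : Real.log b ≠ 0 := Real.log_ne_zero_of_pos_of_ne_one hb hb1
  have hmono : StrictMonoOn (fun t => t * b ^ t * Real.log b - b ^ t) (Icc p q) := by
    apply strictMonoOn_of_deriv_pos (convex_Icc p q)
    · exact continuousOn_of_forall_continuousAt fun x _ => (H_hasDeriv hb x).continuousAt
    · intro x hx
      rw [interior_Icc] at hx
      rw [(H_hasDeriv hb x).deriv]
      have hx0 : 0 < x := hp.trans hx.1
      have : 0 < (Real.log b) ^ 2 := by positivity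
      positivity
  exact hmono (left_mem_Icc.2 hpq.le) (right_mem_Icc.2 hpq.le) hpq


section phi
variable {K : Measure ℝ≥0} [IsFiniteMeasure K] {R : ℝ≥0}

lemma int_comb (hz : K {0} = 0) (hR : K {a : ℝ≥0 | R < a} = 0) (hR1 : 1 ≤ (R:ℝ))
    {p : ℝ} (hp : 0 < p) :
    Integrable (fun a : ℝ≥0 => p * ((a:ℝ) ^ p * Real.log a) - (a:ℝ) ^ p) K :=
  ((int_powlog hz hR hR1 hp).const_mul p).sub (int_pow hz hR hR1 hp.le)

lemma phi_eq (hz : K {0} = 0) (hR : K {a : ℝ≥0 | R < a} = 0) (hR1 : 1 ≤ (R:ℝ))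
    {p : ℝ} (hp : 0 < p) :
    phiK K p = (∫ a, (p * ((a:ℝ) ^ p * Real.log a) - (a:ℝ) ^ p) ∂K) + 1 := by
  unfold phiK lamK lamK'
  rw [integral_sub ((int_powlog hz hR hR1 hp).const_mul p) (int_pow hz hR hR1 hp.le),
    integral_const_mul]

lemma phi_mono (hz : K {0} = 0) (hR : K {a : ℝ≥0 | R < a} = 0) (hR1 : 1 ≤ (R:ℝ))
    {p q : ℝ} (hp : 0 < p) (hpq : p ≤ q) : phiK K p ≤ phiK K q := by
  have hq : 0 < q := hp.trans_le hpq
  rw [phi_eq hz hR hR1 hp, phi_eq hz hR hR1 hq]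
  have key : ∀ᵐ a : ℝ≥0 ∂K, (p * ((a:ℝ) ^ p * Real.log a) - (a:ℝ) ^ p)
      ≤ (q * ((a:ℝ) ^ q * Real.log a) - (a:ℝ) ^ q) := by
    filter_upwards [Kae hz hR] with a ha
    have := H_mono ha.1 hp hpq
    rw [← mul_assoc, ← mul_assoc]
    exact this
  exact add_le_add_left
    (integral_mono_ae (int_comb hz hR hR1 hp) (int_comb hz hR hR1 hq) key) 1

lemma phi_zero_unique (hz : K {0} = 0) (hR : K {a : ℝ≥0 | R < a} = 0) (hR1 : 1 ≤ (R:ℝ))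
    (hc : 1 < (K univ).toReal) {p q : ℝ} (hp : 0 < p) (hpq : p < q)
    (h1 : phiK K p = 0) (h2 : phiK K q = 0) : False := by
  have hq : 0 < q := hp.trans hpq
  set f : ℝ≥0 → ℝ := fun a =>
    (q * ((a:ℝ) ^ q * Real.log a) - (a:ℝ) ^ q) - (p * ((a:ℝ) ^ p * Real.log a) - (a:ℝ) ^ p)
    with hf
  have hfi : Integrable f K := (int_comb hz hR hR1 hq).sub (int_comb hz hR hR1 hp)
  have hint : ∫ a, f a ∂K = 0 := by
    rw [hf]
    rw [integral_sub (int_comb hz hR hR1 hq) (int_comb hz hR hR1 hp)]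
    have e1 := phi_eq hz hR hR1 hp
    have e2 := phi_eq hz hR hR1 hq
    rw [h1] at e1; rw [h2] at e2
    linarith
  have hnn : 0 ≤ᵐ[K] f := by
    filter_upwards [Kae hz hR] with a ha
    have := H_mono ha.1 hp hpq.le
    simp only [hf, Pi.zero_apply]
    rw [← mul_assoc, ← mul_assoc]
    linarith
  have hzero : f =ᵐ[K] 0 := (integral_eq_zero_iff_of_nonneg_ae hnn hfi).1 hint
  have hone : ∀ᵐ a : ℝ≥0 ∂K, (a:ℝ) = 1 := by
    filter_upwards [Kae hz hR, hzero] with a ha hfa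
    by_contra hne
    have := H_strict ha.1 hne hp hpq
    simp only [hf, Pi.zero_apply] at hfa
    rw [← mul_assoc, ← mul_assoc] at hfa
    linarith
  have hlam' : lamK' K p = 0 := by
    unfold lamK'
    rw [integral_congr_ae (g := fun _ => (0:ℝ))
      (hone.mono fun a ha => by rw [ha]; simp)]
    simp
  have hlam : lamK K p = (K univ).toReal := by
    unfold lamK
    rw [integral_congr_ae (g := fun _ => (1:ℝ))
      (hone.mono fun a ha => by rw [ha]; simp)]
    simp [integral_const, smul_eq_mul, measureReal_def]
  have : phiK K p = p * 0 - (K univ).toReal + 1 := by rw [← hlam', ← hlam]; rfl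
  rw [h1] at this
  linarith

lemma muK_hasDerivAt (hz : K {0} = 0) (hR : K {a : ℝ≥0 | R < a} = 0) (hR1 : 1 ≤ (R:ℝ))
    {p : ℝ} (hp : 0 < p) : HasDerivAt (muK K) (phiK K p / p ^ 2) p := by
  have h1 := ((lamK_hasDerivAt hz hR hR1 hp).sub_const 1).div (hasDerivAt_id p)
    (ne_of_gt hp)
  refine h1.congr_deriv ?_
  unfold phiK
  simp only [id]
  field_simp
  ring

lemma phiK_continuousAt (hz : K {0} = 0) (hR : K {a : ℝ≥0 | R < a} = 0) (hR1 : 1 ≤ (R:ℝ))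
    {p : ℝ} (hp : 0 < p) : ContinuousAt (phiK K) p := by
  have h1 : ContinuousAt (lamK K) p := (lamK_hasDerivAt hz hR hR1 hp).continuousAt
  have h2 := lamK'_continuousAt hz hR hR1 hp
  exact ((continuousAt_id.mul h2).sub h1).add continuousAt_const

end phi

section master
variable {K : Measure ℝ≥0} [IsFiniteMeasure K] {R : ℝ≥0}

lemma muK_tendsto_top (hz : K {0} = 0) (hR : K {a : ℝ≥0 | R < a} = 0) (hR1 : 1 ≤ (R:ℝ))
    (hc : 1 < (K univ).toReal) : Tendsto (muK K) (𝓝[>] (0:ℝ)) atTop := by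
  have h1 : Tendsto (fun p => lamK K p - 1) (𝓝[>] (0:ℝ)) (𝓝 ((K univ).toReal - 1)) :=
    ((lamK_tendsto_zero hz hR hR1).sub tendsto_const_nhds)
  have h2 : Tendsto (fun p : ℝ => p⁻¹) (𝓝[>] (0:ℝ)) atTop := tendsto_inv_nhdsGT_zero
  have h3 := h1.pos_mul_atTop (by linarith) h2
  refine h3.congr fun p => ?_
  simp [muK, div_eq_mul_inv]

lemma lamK_nonneg (K : Measure ℝ≥0) (p : ℝ) : 0 ≤ lamK K p :=
  integral_nonneg fun a => Real.rpow_nonneg a.2 p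

lemma muK_bddBelow (hz : K {0} = 0) (hR : K {a : ℝ≥0 | R < a} = 0) (hR1 : 1 ≤ (R:ℝ))
    (hc : 1 < (K univ).toReal) :
    BddBelow (range fun q : Set.Ioi (0:ℝ) => muK K q) := by
  have hev : ∀ᶠ p in 𝓝[>] (0:ℝ), 0 < muK K p :=
    (muK_tendsto_top hz hR hR1 hc).eventually (eventually_gt_atTop 0)
  rw [eventually_iff, mem_nhdsGT_iff_exists_Ioo_subset] at hev
  obtain ⟨u, hu, hsub⟩ := hev
  have hu0 : (0:ℝ) < u := hu
  set δ : ℝ := min (u/2) 1 with hδ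
  have hδ0 : 0 < δ := by positivity
  have hδ1 : δ ≤ 1 := min_le_right _ _
  have hδu : δ < u := lt_of_le_of_lt (min_le_left _ _) (by linarith)
  have hcont : ContinuousOn (muK K) (Icc δ 1) := fun x hx =>
    (muK_hasDerivAt hz hR hR1 (hδ0.trans_le hx.1)).continuousAt.continuousWithinAt
  obtain ⟨z, hz1, hz2⟩ := isCompact_Icc.exists_isMinOn (nonempty_Icc.2 hδ1) hcont
  refine ⟨min (min (muK K z) (-1)) 0, ?_⟩
  rintro _ ⟨⟨p, hp⟩, rfl⟩
  simp only []
  have hp0 : (0:ℝ) < p := hp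
  rcases lt_or_ge p δ with h | h
  · have : 0 < muK K p := hsub ⟨hp0, h.trans hδu⟩
    exact le_trans (min_le_right _ _) this.le
  · rcases le_or_gt p 1 with h1 | h1
    · exact le_trans (le_trans (min_le_left _ _) (min_le_left _ _)) (hz2 ⟨h, h1⟩)
    · have hl : -1 ≤ muK K p := by
        have h0 : (0:ℝ) ≤ lamK K p := lamK_nonneg K p
        rw [show muK K p = (lamK K p - 1)/p from rfl, le_div_iff₀ hp0]
        nlinarith
      exact le_trans (le_trans (min_le_left _ _) (min_le_right _ _)) hl
end master

lemma inverse_pack {f : ℝ → ℝ} {s t : Set ℝ} (hanti : StrictAntiOn f s)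
    (hsurj : Set.SurjOn f s t) :
    ∃ P : ℝ → ℝ, StrictAntiOn P t ∧ ∀ m ∈ t, P m ∈ s ∧ f (P m) = m := by
  refine ⟨Function.invFunOn f s, ?_, fun m hm => ?_⟩
  · intro m₁ h₁ m₂ h₂ h12
    obtain ⟨x₁, hx₁, he₁⟩ := hsurj h₁
    obtain ⟨x₂, hx₂, he₂⟩ := hsurj h₂
    have i1 : Function.invFunOn f s m₁ ∈ s := Function.invFunOn_mem ⟨x₁, hx₁, he₁⟩
    have i2 : Function.invFunOn f s m₂ ∈ s := Function.invFunOn_mem ⟨x₂, hx₂, he₂⟩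
    have e1 : f (Function.invFunOn f s m₁) = m₁ := Function.invFunOn_eq ⟨x₁, hx₁, he₁⟩
    have e2 : f (Function.invFunOn f s m₂) = m₂ := Function.invFunOn_eq ⟨x₂, hx₂, he₂⟩
    by_contra hle
    push_neg at hle
    rcases hle.eq_or_lt with he | hlt
    · rw [← e1, ← e2, he] at h12
      exact lt_irrefl _ h12
    · have hcon := hanti i1 i2 hlt
      rw [e1, e2] at hcon
      linarith
  · obtain ⟨x, hx, he⟩ := hsurj hm
    exact ⟨Function.invFunOn_mem ⟨x, hx, he⟩, Function.invFunOn_eq ⟨x, hx, he⟩⟩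

section master2
variable {K : Measure ℝ≥0} [IsFiniteMeasure K] {R : ℝ≥0}

theorem master (hz : K {0} = 0) (hR : K {a : ℝ≥0 | R < a} = 0) (hR1 : 1 ≤ (R:ℝ))
    (hc : 1 < (K univ).toReal) :
    (∀ p ∈ Set.Ioi (0 : ℝ), DifferentiableAt ℝ (muK K) p) ∧
    (∀ p₁ ∈ Set.Ioi (0 : ℝ), ∀ p₂ ∈ Set.Ioi (0 : ℝ),
      deriv (muK K) p₁ = 0 → deriv (muK K) p₂ = 0 → p₁ = p₂) ∧
    (∀ p₀ ∈ Set.Ioi (0 : ℝ), deriv (muK K) p₀ = 0 →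
      (∀ p ∈ Set.Ioi (0 : ℝ), muK K p₀ ≤ muK K p) ∧
      StrictAntiOn (muK K) (Set.Ioo 0 p₀) ∧
      Set.BijOn (muK K) (Set.Ioo 0 p₀)
        (Set.Ioi (⨅ q : Set.Ioi (0 : ℝ), muK K q)) ∧
      ∃ P : ℝ → ℝ, StrictAntiOn P (Set.Ioi (⨅ q : Set.Ioi (0 : ℝ), muK K q)) ∧
        ∀ m ∈ Set.Ioi (⨅ q : Set.Ioi (0 : ℝ), muK K q),
          P m ∈ Set.Ioo 0 p₀ ∧ muK K (P m) = m) ∧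
    ((∀ p ∈ Set.Ioi (0 : ℝ), deriv (muK K) p ≠ 0) →
      StrictAntiOn (muK K) (Set.Ioi 0) ∧
      Set.BijOn (muK K) (Set.Ioi 0)
        (Set.Ioi (⨅ q : Set.Ioi (0 : ℝ), muK K q)) ∧
      ∃ P : ℝ → ℝ, StrictAntiOn P (Set.Ioi (⨅ q : Set.Ioi (0 : ℝ), muK K q)) ∧
        ∀ m ∈ Set.Ioi (⨅ q : Set.Ioi (0 : ℝ), muK K q),
          P m ∈ Set.Ioi 0 ∧ muK K (P m) = m) := by
  have hD : ∀ p : ℝ, 0 < p → HasDerivAt (muK K) (phiK K p / p ^ 2) p :=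
    fun p hp => muK_hasDerivAt hz hR hR1 hp
  have hd : ∀ p : ℝ, 0 < p → deriv (muK K) p = phiK K p / p ^ 2 :=
    fun p hp => (hD p hp).deriv
  have hcrit : ∀ p : ℝ, 0 < p → (deriv (muK K) p = 0 ↔ phiK K p = 0) := by
    intro p hp
    rw [hd p hp, div_eq_zero_iff]
    constructor
    · rintro (h | h)
      · exact h
      · exact absurd h (by positivity)
    · exact fun h => Or.inl h
  have hcontOn : ∀ s : Set ℝ, s ⊆ Set.Ioi 0 → ContinuousOn (muK K) s :=
    fun s hs x hx => ((hD x (hs hx)).continuousAt).continuousWithinAt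
  refine ⟨fun p hp => (hD p hp).differentiableAt, ?_, ?_, ?_⟩
  · -- uniqueness of critical points
    intro p₁ hp₁ p₂ hp₂ h₁ h₂
    by_contra hne
    rcases lt_or_gt_of_ne hne with h | h
    · exact phi_zero_unique hz hR hR1 hc hp₁ h ((hcrit _ hp₁).1 h₁) ((hcrit _ hp₂).1 h₂)
    · exact phi_zero_unique hz hR hR1 hc hp₂ h ((hcrit _ hp₂).1 h₂) ((hcrit _ hp₁).1 h₁)
  · -- critical point exists
    intro p₀ hp₀ hcrit₀
    have hp₀' : (0:ℝ) < p₀ := hp₀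
    have hphi₀ : phiK K p₀ = 0 := (hcrit _ hp₀').1 hcrit₀
    have hneg : ∀ p : ℝ, 0 < p → p < p₀ → phiK K p < 0 := by
      intro p hp hlt
      rcases lt_or_eq_of_le (phi_mono hz hR hR1 hp hlt.le) with h | h
      · rw [hphi₀] at h; exact h
      · exact (phi_zero_unique hz hR hR1 hc hp hlt (h.trans hphi₀) hphi₀).elim
    have hpos : ∀ p : ℝ, p₀ < p → 0 < phiK K p := by
      intro p hlt
      rcases lt_or_eq_of_le (phi_mono hz hR hR1 hp₀' hlt.le) with h | h
      · rw [hphi₀] at h; exact h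
      · exact (phi_zero_unique hz hR hR1 hc hp₀' hlt hphi₀ (h.symm.trans hphi₀)).elim
    -- strict decrease on (0, p₀]
    have hanti : StrictAntiOn (muK K) (Set.Ioc 0 p₀) := by
      apply strictAntiOn_of_deriv_neg (convex_Ioc 0 p₀)
        (hcontOn _ Ioc_subset_Ioi_self)
      intro x hx
      rw [interior_Ioc] at hx
      rw [hd x hx.1]
      exact div_neg_of_neg_of_pos (hneg x hx.1 hx.2) (pow_pos hx.1 2)
    have hmono : MonotoneOn (muK K) (Set.Ici p₀) := by
      apply monotoneOn_of_deriv_nonneg (convex_Ici p₀)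
        (hcontOn _ fun x hx => lt_of_lt_of_le hp₀' hx)
      · intro x hx
        rw [interior_Ici] at hx
        exact (hD x (hp₀'.trans hx)).differentiableAt.differentiableWithinAt
      · intro x hx
        rw [interior_Ici] at hx
        rw [hd x (hp₀'.trans hx)]
        exact le_of_lt (div_pos (hpos x hx) (pow_pos (hp₀'.trans hx) 2))
    have hmin : ∀ p ∈ Set.Ioi (0:ℝ), muK K p₀ ≤ muK K p := by
      intro p hp
      rcases lt_trichotomy p p₀ with h | h | h
      · exact (hanti ⟨hp, h.le⟩ ⟨hp₀', le_rfl⟩ h).le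
      · rw [h]
      · exact hmono (self_mem_Ici) (le_of_lt h) h.le
    have hbddB : BddBelow (range fun q : Set.Ioi (0:ℝ) => muK K q) := by
      refine ⟨muK K p₀, ?_⟩
      rintro _ ⟨q, rfl⟩
      exact hmin q q.2
    have hinf : (⨅ q : Set.Ioi (0:ℝ), muK K q) = muK K p₀ :=
      le_antisymm (ciInf_le hbddB ⟨p₀, hp₀⟩) (le_ciInf fun q => hmin q q.2)
    have hanti' : StrictAntiOn (muK K) (Set.Ioo 0 p₀) := hanti.mono Ioo_subset_Ioc_self
    have hmaps : Set.MapsTo (muK K) (Set.Ioo 0 p₀)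
        (Set.Ioi (⨅ q : Set.Ioi (0:ℝ), muK K q)) := by
      intro p hp
      rw [mem_Ioi, hinf]
      exact hanti ⟨hp.1, hp.2.le⟩ ⟨hp₀', le_rfl⟩ hp.2
    have hsurj : Set.SurjOn (muK K) (Set.Ioo 0 p₀)
        (Set.Ioi (⨅ q : Set.Ioi (0:ℝ), muK K q)) := by
      intro m hm
      rw [mem_Ioi, hinf] at hm
      have hev : ∀ᶠ p in 𝓝[>] (0:ℝ), m < muK K p ∧ p ∈ Set.Ioo (0:ℝ) p₀ :=
        ((muK_tendsto_top hz hR hR1 hc).eventually (eventually_gt_atTop m)).and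
          (Filter.eventually_of_mem (Ioo_mem_nhdsGT hp₀') fun x hx => hx)
      obtain ⟨p, hp1, hp2⟩ := hev.exists
      have hivt := intermediate_value_Icc' hp2.2.le
        (hcontOn _ (fun x hx => lt_of_lt_of_le hp2.1 hx.1))
      have hmem : m ∈ Icc (muK K p₀) (muK K p) := ⟨hm.le, hp1.le⟩
      obtain ⟨x, hx, hfx⟩ := hivt hmem
      refine ⟨x, ⟨lt_of_lt_of_le hp2.1 hx.1, lt_of_le_of_ne hx.2 ?_⟩, hfx⟩
      intro hx0
      rw [hx0] at hfx
      linarith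
    obtain ⟨P, hP1, hP2⟩ := inverse_pack hanti' hsurj
    exact ⟨hmin, hanti', ⟨hmaps, hanti'.injOn, hsurj⟩, P, hP1, hP2⟩
  · -- no critical point
    intro hne
    have hphine : ∀ p : ℝ, 0 < p → phiK K p ≠ 0 :=
      fun p hp h => hne p hp ((hcrit p hp).2 h)
    have hneg : ∀ p : ℝ, 0 < p → phiK K p < 0 := by
      intro p hp
      by_contra hnn
      push_neg at hnn
      have hppos : 0 < phiK K p := lt_of_le_of_ne hnn (Ne.symm (hphine p hp))
      -- φ > 0 on (0, p]
      have hallpos : ∀ x : ℝ, 0 < x → x ≤ p → 0 < phiK K x := by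
        intro x hx hxp
        rcases lt_trichotomy (phiK K x) 0 with h | h | h
        · exfalso
          have hivt := intermediate_value_Icc hxp
            ((fun y hy => (phiK_continuousAt hz hR hR1
              (lt_of_lt_of_le hx hy.1)).continuousWithinAt) :
              ContinuousOn (phiK K) (Icc x p))
          have : (0:ℝ) ∈ Icc (phiK K x) (phiK K p) := ⟨h.le, hppos.le⟩
          obtain ⟨y, hy, hfy⟩ := hivt this
          exact hphine y (lt_of_lt_of_le hx hy.1) hfy
        · exact absurd h (hphine x hx)
        · exact h
      have hmono : StrictMonoOn (muK K) (Set.Ioc 0 p) := by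
        apply strictMonoOn_of_deriv_pos (convex_Ioc 0 p)
          (hcontOn _ Ioc_subset_Ioi_self)
        intro x hx
        rw [interior_Ioc] at hx
        rw [hd x hx.1]
        exact div_pos (hallpos x hx.1 hx.2.le) (pow_pos hx.1 2)
      have hev : ∀ᶠ x in 𝓝[>] (0:ℝ), muK K p < muK K x ∧ x ∈ Set.Ioo (0:ℝ) p :=
        ((muK_tendsto_top hz hR hR1 hc).eventually
          (eventually_gt_atTop (muK K p))).and
          (Filter.eventually_of_mem (Ioo_mem_nhdsGT hp) fun x hx => hx)
      obtain ⟨x, hx1, hx2⟩ := hev.exists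
      have := hmono ⟨hx2.1, hx2.2.le⟩ ⟨hp, le_rfl⟩ hx2.2
      linarith
    have hanti : StrictAntiOn (muK K) (Set.Ioi 0) := by
      apply strictAntiOn_of_deriv_neg (convex_Ioi 0) (hcontOn _ subset_rfl)
      intro x hx
      rw [interior_Ioi] at hx
      rw [hd x hx]
      exact div_neg_of_neg_of_pos (hneg x hx) (pow_pos hx 2)
    have hbddB : BddBelow (range fun q : Set.Ioi (0:ℝ) => muK K q) :=
      muK_bddBelow hz hR hR1 hc
    have hmaps : Set.MapsTo (muK K) (Set.Ioi 0)
        (Set.Ioi (⨅ q : Set.Ioi (0:ℝ), muK K q)) := by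
      intro p hp
      have h1 : (⨅ q : Set.Ioi (0:ℝ), muK K q) ≤ muK K (p + 1) :=
        ciInf_le hbddB ⟨p + 1, by simp only [mem_Ioi]; linarith [mem_Ioi.1 hp]⟩
      have h2 : muK K (p + 1) < muK K p :=
        hanti hp (by simp only [mem_Ioi]; linarith [mem_Ioi.1 hp]) (by linarith)
      exact lt_of_le_of_lt h1 h2
    have hsurj : Set.SurjOn (muK K) (Set.Ioi 0)
        (Set.Ioi (⨅ q : Set.Ioi (0:ℝ), muK K q)) := by
      intro m hm
      rw [mem_Ioi] at hm
      obtain ⟨⟨q, hq⟩, hq2⟩ := exists_lt_of_ciInf_lt hm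
      have hq' : (0:ℝ) < q := hq
      have hev : ∀ᶠ x in 𝓝[>] (0:ℝ), m < muK K x ∧ x ∈ Set.Ioo (0:ℝ) q :=
        ((muK_tendsto_top hz hR hR1 hc).eventually (eventually_gt_atTop m)).and
          (Filter.eventually_of_mem (Ioo_mem_nhdsGT hq') fun x hx => hx)
      obtain ⟨p, hp1, hp2⟩ := hev.exists
      have hivt := intermediate_value_Icc' hp2.2.le
        (hcontOn _ (fun x hx => lt_of_lt_of_le hp2.1 hx.1))
      have hmem : m ∈ Icc (muK K q) (muK K p) := ⟨hq2.le, hp1.le⟩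
      obtain ⟨x, hx, hfx⟩ := hivt hmem
      exact ⟨x, lt_of_lt_of_le hp2.1 hx.1, hfx⟩
    obtain ⟨P, hP1, hP2⟩ := inverse_pack hanti hsurj
    exact ⟨hanti, ⟨hmaps, hanti.injOn, hsurj⟩, P, hP1, hP2⟩
end master2

section concrete
variable {N : ℕ} (α : Fin N → ℝ) (A : (n : Fin N) → Measure (Fin ((n : ℕ) + 1) → ℝ≥0))


lemma Kmeas_univ (hprob : ∀ n, IsProbabilityMeasure (A n)) :
    Kmeas α A univ = ∑ n : Fin N, (((n : ℕ) + 1 : ℝ≥0∞) * ENNReal.ofReal (α n)) := by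
  unfold Kmeas
  rw [Measure.finset_sum_apply]
  congr 1
  ext n
  rw [Measure.smul_apply, smul_eq_mul,
    Measure.map_apply (measurable_pi_apply 0) MeasurableSet.univ]
  simp [measure_univ]

lemma Kmeas_finite (hprob : ∀ n, IsProbabilityMeasure (A n)) :
    IsFiniteMeasure (Kmeas α A) := by
  constructor
  rw [Kmeas_univ α A hprob]
  refine ENNReal.sum_lt_top.2 fun n _ => ?_
  exact ENNReal.mul_lt_top (by simp) ENNReal.ofReal_lt_top

lemma Kmeas_toReal (hα : ∀ n, 0 ≤ α n) (hprob : ∀ n, IsProbabilityMeasure (A n)) :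
    ((Kmeas α A) univ).toReal = ∑ n : Fin N, (((n : ℕ) : ℝ) + 1) * α n := by
  rw [Kmeas_univ α A hprob, ENNReal.toReal_sum]
  · refine Finset.sum_congr rfl fun n _ => ?_
    rw [ENNReal.toReal_mul, ENNReal.toReal_ofReal (hα n)]
    have he : (((n:ℕ) : ℝ≥0∞) + 1).toReal = ((n:ℕ) : ℝ) + 1 := by
      rw [ENNReal.toReal_add (by simp) (by simp)]
      simp
    rw [he]
  · intro n _
    exact ENNReal.mul_ne_top (by simp) ENNReal.ofReal_ne_top

lemma Kmeas_mass (hN : 2 ≤ N) (hα : ∀ n, 0 ≤ α n) (hsum : ∑ n, α n = 1)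
    (hlast : 0 < α ⟨N - 1, Nat.sub_lt (by omega) Nat.one_pos⟩) (hprob : ∀ n, IsProbabilityMeasure (A n)) :
    1 < ((Kmeas α A) univ).toReal := by
  rw [Kmeas_toReal α A hα hprob]
  have h1 : ∑ n : Fin N, (((n : ℕ) : ℝ) + 1) * α n
      = (∑ n, α n) + ∑ n : Fin N, ((n : ℕ) : ℝ) * α n := by
    rw [← Finset.sum_add_distrib]
    congr 1
    ext n
    ring
  have h2 : ((((⟨N - 1, by omega⟩ : Fin N) : ℕ) : ℝ)) * α ⟨N - 1, by omega⟩
      ≤ ∑ n : Fin N, ((n : ℕ) : ℝ) * α n :=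
    Finset.single_le_sum (f := fun i : Fin N => ((i : ℕ) : ℝ) * α i)
      (fun i _ => mul_nonneg (Nat.cast_nonneg _) (hα i)) (Finset.mem_univ _)
  have h3 : (0:ℝ) < ((((⟨N - 1, by omega⟩ : Fin N) : ℕ) : ℝ)) * α ⟨N - 1, by omega⟩ := by
    apply mul_pos _ hlast
    simp only [Fin.val_mk]
    have : 1 ≤ N - 1 := by omega
    exact_mod_cast Nat.lt_of_lt_of_le Nat.zero_lt_one (by exact_mod_cast this)
  rw [h1, hsum]
  linarith

lemma Kmeas_compact (hcomp : ∀ n, ∃ R : ℝ≥0, (A n) {a | ∃ k, R < a k} = 0) :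
    ∃ R : ℝ≥0, 1 ≤ (R:ℝ) ∧ (Kmeas α A) {a : ℝ≥0 | R < a} = 0 := by
  choose Rf hRf using hcomp
  refine ⟨1 + ∑ n, Rf n,
    by exact_mod_cast (le_add_of_nonneg_right zero_le : (1:ℝ≥0) ≤ 1 + ∑ n, Rf n), ?_⟩
  unfold Kmeas
  rw [Measure.finset_sum_apply]
  refine Finset.sum_eq_zero fun n _ => ?_
  rw [Measure.smul_apply, smul_eq_mul]
  have hms : MeasurableSet {a : ℝ≥0 | (1 + ∑ n, Rf n : ℝ≥0) < a} := measurableSet_Ioi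
  rw [Measure.map_apply (measurable_pi_apply 0) hms]
  have hsub : (fun a : Fin ((n:ℕ)+1) → ℝ≥0 => a 0) ⁻¹' {a : ℝ≥0 | (1 + ∑ n, Rf n : ℝ≥0) < a}
      ⊆ {a | ∃ k, Rf n < a k} := by
    intro a ha
    refine ⟨0, ?_⟩
    have h1 : Rf n ≤ ∑ m, Rf m := Finset.single_le_sum (fun i _ => zero_le)
      (Finset.mem_univ n)
    have h2 : (1 + ∑ m, Rf m : ℝ≥0) < a 0 := ha
    calc Rf n ≤ ∑ m, Rf m := h1
      _ ≤ 1 + ∑ m, Rf m := le_add_self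
      _ < a 0 := h2
  rw [measure_mono_null hsub (hRf n)]
  simp

end concrete

theorem stmt_8 (N : ℕ) (hN : 2 ≤ N) (α : Fin N → ℝ) (hα : ∀ n, 0 ≤ α n)
    (hsum : ∑ n, α n = 1)
    (hlast : 0 < α ⟨N - 1, by omega⟩)
    (A : (n : Fin N) → Measure (Fin ((n : ℕ) + 1) → ℝ≥0))
    (hprob : ∀ n, IsProbabilityMeasure (A n))
    (hcomp : ∀ n, ∃ R : ℝ≥0, (A n) {a | ∃ k, R < a k} = 0)
    (hperm : ∀ (n : Fin N) (σ : Equiv.Perm (Fin ((n : ℕ) + 1))),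
      (A n).map (fun a k => a (σ k)) = A n)
    (hzero : Kmeas α A {0} = 0) :
    (∀ p ∈ Set.Ioi (0 : ℝ), DifferentiableAt ℝ (muK (Kmeas α A)) p) ∧
    -- at most one critical point
    (∀ p₁ ∈ Set.Ioi (0 : ℝ), ∀ p₂ ∈ Set.Ioi (0 : ℝ),
      deriv (muK (Kmeas α A)) p₁ = 0 → deriv (muK (Kmeas α A)) p₂ = 0 → p₁ = p₂) ∧
    -- if a critical point p₀ exists: global minimum, strict decrease on (0,p₀),
    -- and μ is a strictly decreasing bijection from (0,p₀) onto (inf μ, ∞)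
    (∀ p₀ ∈ Set.Ioi (0 : ℝ), deriv (muK (Kmeas α A)) p₀ = 0 →
      (∀ p ∈ Set.Ioi (0 : ℝ), muK (Kmeas α A) p₀ ≤ muK (Kmeas α A) p) ∧
      StrictAntiOn (muK (Kmeas α A)) (Set.Ioo 0 p₀) ∧
      Set.BijOn (muK (Kmeas α A)) (Set.Ioo 0 p₀)
        (Set.Ioi (⨅ q : Set.Ioi (0 : ℝ), muK (Kmeas α A) q)) ∧
      ∃ P : ℝ → ℝ, StrictAntiOn P (Set.Ioi (⨅ q : Set.Ioi (0 : ℝ), muK (Kmeas α A) q)) ∧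
        ∀ m ∈ Set.Ioi (⨅ q : Set.Ioi (0 : ℝ), muK (Kmeas α A) q),
          P m ∈ Set.Ioo 0 p₀ ∧ muK (Kmeas α A) (P m) = m) ∧
    -- if no critical point exists: strict decrease on (0,∞), and μ is a strictly
    -- decreasing bijection from (0,∞) onto (inf μ, ∞)
    ((∀ p ∈ Set.Ioi (0 : ℝ), deriv (muK (Kmeas α A)) p ≠ 0) →
      StrictAntiOn (muK (Kmeas α A)) (Set.Ioi 0) ∧
      Set.BijOn (muK (Kmeas α A)) (Set.Ioi 0)
        (Set.Ioi (⨅ q : Set.Ioi (0 : ℝ), muK (Kmeas α A) q)) ∧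
      ∃ P : ℝ → ℝ, StrictAntiOn P (Set.Ioi (⨅ q : Set.Ioi (0 : ℝ), muK (Kmeas α A) q)) ∧
        ∀ m ∈ Set.Ioi (⨅ q : Set.Ioi (0 : ℝ), muK (Kmeas α A) q),
          P m ∈ Set.Ioi 0 ∧ muK (Kmeas α A) (P m) = m) := by
  haveI : IsFiniteMeasure (Kmeas α A) := Kmeas_finite α A hprob
  obtain ⟨R, hR1, hRK⟩ := Kmeas_compact α A hcomp
  exact master hzero hRK hR1 (Kmeas_mass α A hN hα hsum hlast hprob)
end

section
/- Suppose Γ satisfies conditions (a) and (b) with L of the integral form, that Γ(1) = 1 (where 1 denotes the constant function equal to one), and let μ ∈ ℝ and p > 0 satisfy μ(p) < μ. Then the constant function w ≡ 1 is the unique continuous solution of the integral equation w(x) = ∫₀¹ Γ(w)(x τ^μ) dτ in the class of functions with ‖w‖ ≤ 1 and w = 1 + O(x^p). Equivalently, if there exists a non-constant continuous solution w of this equation with ‖w‖ = 1 and w = 1 + O(x^p) for some p > 0, then μ ≤ μ(p). -/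
/- STATEMENT 14: Under (a), (b) (L of integral form) and Γ(1) = 1: if μ ∈ ℝ and p > 0 satisfy
μ(p) < μ, then w ≡ 1 is the unique continuous solution of w(x) = ∫₀¹ Γ(w)(x τ^μ) dτ in the
class ‖w‖ ≤ 1, w = 1 + O(x^p). -/

open MeasureTheory Filter Set
open scoped NNReal ENNReal BigOperators Topology

theorem stmt_14
    (Γ : BoundedContinuousFunction ℝ≥0 ℂ → BoundedContinuousFunction ℝ≥0 ℂ)
    (K : Measure ℝ≥0) (hKfin : IsFiniteMeasure K)
    (hKcomp : ∃ R : ℝ≥0, K {a | R < a} = 0)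
    -- (a) Γ maps U into itself
    (ha : ∀ u : BoundedContinuousFunction ℝ≥0 ℂ, ‖u‖ ≤ 1 → ‖Γ u‖ ≤ 1)
    -- (b) Γ is L-Lipschitz with L of integral form
    (hb : ∀ u₁ u₂ : BoundedContinuousFunction ℝ≥0 ℂ, ‖u₁‖ ≤ 1 → ‖u₂‖ ≤ 1 →
      ∀ x : ℝ≥0, ‖Γ u₁ x - Γ u₂ x‖ ≤ ∫ a, ‖u₁ (a * x) - u₂ (a * x)‖ ∂K)
    -- Γ(1) = 1
    (hone : Γ 1 = 1)
    (m : ℝ) (p : ℝ) (hp : 0 < p) (hμp : muK K p < m) :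
    ∀ w : BoundedContinuousFunction ℝ≥0 ℂ, ‖w‖ ≤ 1 →
      (∃ C > (0 : ℝ), ∀ x : ℝ≥0, ‖w x - 1‖ ≤ C * (x : ℝ) ^ p) →
      (∀ x : ℝ≥0, w x = ∫ τ in Set.Ioo (0 : ℝ) 1, Γ w (Real.toNNReal (τ ^ m) * x)) →
      w = 1 := by
  haveI := hKfin
  intro w hw hO heq
  obtain ⟨C, hC, hbd⟩ := hO
  obtain ⟨R, hR⟩ := hKcomp
  set lp := lamK K p with hlp
  have hlnn : 0 ≤ lp := integral_nonneg fun a => Real.rpow_nonneg a.2 p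
  have hlt : lp - 1 < m * p := by
    have := (div_lt_iff₀ hp).mp hμp
    linarith [this]
  have hmp1 : 0 < m * p + 1 := by linarith
  set q : ℝ := lp / (m * p + 1) with hq
  have hq0 : 0 ≤ q := div_nonneg hlnn hmp1.le
  have hq1 : q < 1 := (div_lt_one hmp1).mpr (by linarith)
  -- integrability of a ↦ a^p wrt K
  have haeR : ∀ᵐ a ∂K, (a : ℝ≥0) ≤ R := by
    rw [ae_iff]
    simpa [not_le] using hR
  have hmeas_ap : Measurable fun a : ℝ≥0 => (a : ℝ) ^ p := by fun_prop
  have hint_ap : Integrable (fun a : ℝ≥0 => (a : ℝ) ^ p) K := by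
    refine Integrable.mono' (integrable_const ((R : ℝ) ^ p)) hmeas_ap.aestronglyMeasurable ?_
    filter_upwards [haeR] with a haR
    calc ‖(a:ℝ)^p‖ = (a:ℝ)^p := Real.norm_of_nonneg (by positivity)
      _ ≤ (R:ℝ)^p := Real.rpow_le_rpow (by positivity) (NNReal.coe_le_coe.mpr haR) hp.le
  -- the integrand in the equation
  have hIoo : (volume (Set.Ioo (0:ℝ) 1)).toReal = 1 := by simp
  have hint_eq : ∀ x : ℝ≥0, IntegrableOn
      (fun τ : ℝ => Γ w (Real.toNNReal (τ ^ m) * x)) (Set.Ioo (0:ℝ) 1) := by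
    intro x
    have hm : Measurable fun τ : ℝ => Γ w (Real.toNNReal (τ ^ m) * x) := by
      apply (Γ w).continuous.measurable.comp
      exact (measurable_real_toNNReal.comp (measurable_id.pow_const m)).mul_const x
    refine Integrable.mono' (integrable_const ‖Γ w‖)
      (hm.aestronglyMeasurable.restrict) ?_
    filter_upwards with τ
    exact (Γ w).norm_coe_le_norm _
  -- key contraction step
  have key : ∀ D : ℝ, 0 ≤ D → (∀ x : ℝ≥0, ‖w x - 1‖ ≤ D * (x : ℝ) ^ p) →
      ∀ x : ℝ≥0, ‖w x - 1‖ ≤ (D * q) * (x : ℝ) ^ p := by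
    intro D hD hDbd x
    have hsub : w x - 1 =
        ∫ τ in Set.Ioo (0:ℝ) 1, (Γ w (Real.toNNReal (τ ^ m) * x) - 1) := by
      rw [integral_sub (hint_eq x) (integrable_const 1), ← heq x]
      simp [hIoo]
    rw [hsub]
    calc ‖∫ τ in Set.Ioo (0:ℝ) 1, (Γ w (Real.toNNReal (τ ^ m) * x) - 1)‖
        ≤ ∫ τ in Set.Ioo (0:ℝ) 1, ‖Γ w (Real.toNNReal (τ ^ m) * x) - 1‖ :=
          norm_integral_le_integral_norm _
      _ ≤ ∫ τ in Set.Ioo (0:ℝ) 1, (D * lp * (x : ℝ) ^ p) * τ ^ (m * p) := by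
          apply integral_mono_of_nonneg
          · filter_upwards with τ; positivity
          · have h1 : IntervalIntegrable (fun τ : ℝ => τ ^ (m * p)) volume 0 1 :=
              intervalIntegral.intervalIntegrable_rpow' (by linarith)
            have h2 : IntegrableOn (fun τ : ℝ => τ ^ (m * p)) (Set.Ioo (0:ℝ) 1) :=
              ((intervalIntegrable_iff_integrableOn_Ioc_of_le zero_le_one).mp h1).mono_set
                Set.Ioo_subset_Ioc_self
            exact h2.const_mul _
          · filter_upwards [ae_restrict_mem measurableSet_Ioo] with τ hτ
            set t : ℝ≥0 := Real.toNNReal (τ ^ m) with ht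
            have htc : (t : ℝ) = τ ^ m := Real.coe_toNNReal _ (Real.rpow_nonneg hτ.1.le m)
            have step1 : ‖Γ w (t * x) - 1‖ ≤ ∫ a, ‖w (a * (t * x)) - 1‖ ∂K := by
              have := hb w 1 hw (by simp) (t * x)
              simpa [hone] using this
            have step2 : (∫ a, ‖w (a * (t * x)) - 1‖ ∂K)
                ≤ ∫ a, D * ((x:ℝ)^p * (τ ^ (m*p))) * (a : ℝ) ^ p ∂K := by
              apply integral_mono_of_nonneg
              · filter_upwards with a; positivity
              · exact hint_ap.const_mul _
              · filter_upwards with a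
                have := hDbd (a * (t * x))
                refine this.trans (le_of_eq ?_)
                push_cast
                rw [Real.mul_rpow (by positivity) (by positivity),
                  Real.mul_rpow (by positivity) (by positivity), htc,
                  ← Real.rpow_mul hτ.1.le]
                ring
            have step3 : (∫ a, D * ((x:ℝ)^p * (τ ^ (m*p))) * (a : ℝ) ^ p ∂K)
                = D * lp * (x : ℝ) ^ p * τ ^ (m * p) := by
              rw [integral_const_mul]
              rw [hlp]; unfold lamK; ring
            calc ‖Γ w (t * x) - 1‖ ≤ _ := step1
              _ ≤ _ := step2
              _ = _ := step3
      _ = (D * lp * (x : ℝ) ^ p) * ∫ τ in Set.Ioo (0:ℝ) 1, τ ^ (m * p) := by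
          rw [integral_const_mul]
      _ = (D * q) * (x : ℝ) ^ p := by
          have : (∫ τ in Set.Ioo (0:ℝ) 1, τ ^ (m * p)) = 1 / (m * p + 1) := by
            rw [← integral_Ioc_eq_integral_Ioo,
              ← intervalIntegral.integral_of_le zero_le_one,
              integral_rpow (Or.inl (by linarith))]
            rw [Real.one_rpow, Real.zero_rpow (by positivity)]
            ring
          rw [this, hq]
          field_simp
          try ring
  -- iterate
  have iter : ∀ n : ℕ, ∀ x : ℝ≥0, ‖w x - 1‖ ≤ (C * q ^ n) * (x : ℝ) ^ p := by
    intro n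
    induction n with
    | zero => simpa using hbd
    | succ n ih =>
      intro x
      have := key (C * q ^ n) (by positivity) ih x
      calc ‖w x - 1‖ ≤ (C * q ^ n * q) * (x:ℝ)^p := this
        _ = (C * q ^ (n+1)) * (x:ℝ)^p := by ring
  -- limit
  ext x
  have htend : Tendsto (fun n : ℕ => (C * q ^ n) * (x : ℝ) ^ p) atTop (𝓝 0) := by
    have h := (tendsto_pow_atTop_nhds_zero_of_lt_one hq0 hq1).const_mul C
    simpa using h.mul_const ((x : ℝ) ^ p)
  have hle : ‖w x - 1‖ ≤ 0 :=
    ge_of_tendsto htend (Eventually.of_forall fun n => iter n x)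
  have hz : w x = 1 := by simpa [sub_eq_zero] using le_antisymm hle (norm_nonneg _)
  simpa using hz
end

section
/- Let G be a nonnegative Lebesgue-integrable function on [0,1] with ∫₀¹ G(s) ds = 1 and ∫₀¹ G(s) s(1−s) ds > 0, and define λ(p) = ∫₀¹ G(s) (s^p + (1−s)^p) ds and μ(p) = (λ(p) − 1)/p for p > 0. Then: lim_{p→0⁺} p μ(p) = 1; lim_{p→∞} μ(p) = 0; μ(p) > 0 for 0 < p < 1; μ(1) = 0; μ(p) < 0 for p > 1; and μ(2) = μ(3) = −∫₀¹ G(s) s(1−s) ds. Consequently, the unique critical point p₀ of μ (which is its global minimum point) lies in the open interval (2,3). -/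
/- STATEMENT 19: Spectral function of the elastic Maxwell–Boltzmann model:
G ≥ 0 integrable on [0,1] with ∫G = 1 and ∫G s(1−s) ds > 0,
λ(p) = ∫₀¹ G(s)(s^p + (1−s)^p) ds, μ(p) = (λ(p)−1)/p. Then p μ(p) → 1 as p → 0⁺,
μ(p) → 0 as p → ∞, μ > 0 on (0,1), μ(1) = 0, μ < 0 on (1,∞),
μ(2) = μ(3) = −∫₀¹ G(s) s(1−s) ds, and the unique critical (global minimum) point p₀ of μ
lies in (2,3). -/

open MeasureTheory Filter Set
open scoped NNReal ENNReal BigOperators Topology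

/-- `λ(p) = ∫₀¹ G(s) (s^p + (1−s)^p) ds`. -/
noncomputable def lamG (G : ℝ → ℝ) (p : ℝ) : ℝ :=
  ∫ s in Set.Icc (0 : ℝ) 1, G s * (s ^ p + (1 - s) ^ p)

/-- The spectral function `μ(p) = (λ(p) − 1)/p`. -/
noncomputable def muG (G : ℝ → ℝ) (p : ℝ) : ℝ := (lamG G p - 1) / p

private lemma texp_le {δ t : ℝ} (hδ : 0 < δ) (ht : 0 ≤ t) :
    t * Real.exp (-(δ * t)) ≤ 1 / (δ * Real.exp 1) := by
  have h1 : δ * t ≤ Real.exp (δ * t - 1) := by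
    have := Real.add_one_le_exp (δ * t - 1); linarith
  have hepos : (0:ℝ) < Real.exp (-(δ * t)) := Real.exp_pos _
  have h2 : Real.exp (δ * t - 1) * Real.exp (-(δ * t)) * Real.exp 1 = 1 := by
    rw [← Real.exp_add, ← Real.exp_add, show δ * t - 1 + -(δ * t) + 1 = 0 by ring, Real.exp_zero]
  have hδ' : (0:ℝ) < δ * Real.exp 1 := by positivity
  rw [le_div_iff₀ hδ']
  calc t * Real.exp (-(δ * t)) * (δ * Real.exp 1)
      = ((δ * t) * Real.exp (-(δ * t))) * Real.exp 1 := by ring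
    _ ≤ (Real.exp (δ * t - 1) * Real.exp (-(δ * t))) * Real.exp 1 := by
        have := mul_le_mul_of_nonneg_right h1 hepos.le
        exact mul_le_mul_of_nonneg_right this (Real.exp_pos 1).le
    _ = 1 := h2

private lemma rpow_log_le {δ s : ℝ} (hδ : 0 < δ) (hs0 : 0 ≤ s) (hs1 : s ≤ 1) :
    s ^ δ * |Real.log s| ≤ 1 / (δ * Real.exp 1) := by
  rcases eq_or_lt_of_le hs0 with h | h
  · rw [← h, Real.zero_rpow hδ.ne', zero_mul]
    positivity
  · have hlog : Real.log s ≤ 0 := Real.log_nonpos hs0 hs1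
    have hpow : s ^ δ = Real.exp (-(δ * (-Real.log s))) := by
      rw [Real.rpow_def_of_pos h]; ring_nf
    rw [abs_of_nonpos hlog]
    calc s ^ δ * (-Real.log s) = (-Real.log s) * Real.exp (-(δ * (-Real.log s))) := by
          rw [hpow]; ring
      _ ≤ _ := texp_le hδ (neg_nonneg.mpr hlog)

private lemma rpow_log_le' {δ t s : ℝ} (hδ : 0 < δ) (hts : δ ≤ t) (hs0 : 0 ≤ s) (hs1 : s ≤ 1) :
    s ^ t * |Real.log s| ≤ 1 / (δ * Real.exp 1) := by
  have ht : 0 < t := lt_of_lt_of_le hδ hts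
  have h1 : s ^ t ≤ s ^ δ := by
    rcases eq_or_lt_of_le hs0 with h | h
    · rw [← h, Real.zero_rpow ht.ne', Real.zero_rpow hδ.ne']
    · exact Real.rpow_le_rpow_of_exponent_ge h hs1 hts
  exact le_trans (mul_le_mul_of_nonneg_right h1 (abs_nonneg _)) (rpow_log_le hδ hs0 hs1)

private lemma rpow_log_sq_le {δ t s : ℝ} (hδ : 0 < δ) (hts : δ ≤ t) (hs0 : 0 ≤ s) (hs1 : s ≤ 1) :
    s ^ t * (Real.log s) ^ 2 ≤ (1 / (δ / 2 * Real.exp 1)) ^ 2 := by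
  have ht : 0 < t := lt_of_lt_of_le hδ hts
  rcases eq_or_lt_of_le hs0 with h | h
  · rw [← h, Real.zero_rpow ht.ne', zero_mul]; positivity
  · have hsum : s ^ t = s ^ (t/2) * s ^ (t/2) := by
      rw [← Real.rpow_add h]; norm_num
    have key : s ^ t * (Real.log s) ^ 2 = (s ^ (t/2) * |Real.log s|) ^ 2 := by
      rw [mul_pow, sq_abs, hsum]; ring
    rw [key]
    have hb := rpow_log_le' (δ := δ/2) (t := t/2) (half_pos hδ) (by linarith) hs0 hs1
    exact pow_le_pow_left₀ (by positivity) hb 2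

private lemma hasDerivAt_exp_base {x : ℝ} (hx : 0 ≤ x) {t : ℝ} (ht : 0 < t) :
    HasDerivAt (fun u : ℝ => x ^ u) (x ^ t * Real.log x) t := by
  rcases eq_or_lt_of_le hx with h | h
  · have hev : (fun u : ℝ => x ^ u) =ᶠ[𝓝 t] fun _ => (0:ℝ) := by
      filter_upwards [eventually_gt_nhds ht] with u hu
      rw [← h, Real.zero_rpow hu.ne']
    have h0 : HasDerivAt (fun _ : ℝ => (0:ℝ)) 0 t := hasDerivAt_const _ _
    have := h0.congr_of_eventuallyEq hev
    simpa [← h, Real.zero_rpow ht.ne', Real.log_zero] using this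
  · exact (Real.hasStrictDerivAt_const_rpow h t).hasDerivAt

noncomputable def lam1G (G : ℝ → ℝ) (p : ℝ) : ℝ :=
  ∫ s in Set.Icc (0 : ℝ) 1, G s * (s ^ p * Real.log s + (1 - s) ^ p * Real.log (1 - s))

noncomputable def lam2G (G : ℝ → ℝ) (p : ℝ) : ℝ :=
  ∫ s in Set.Icc (0 : ℝ) 1,
    G s * (s ^ p * (Real.log s) ^ 2 + (1 - s) ^ p * (Real.log (1 - s)) ^ 2)

private lemma intG_mul {G f : ℝ → ℝ} (hGint : IntegrableOn G (Set.Icc (0:ℝ) 1))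
    (hf : AEStronglyMeasurable f (volume.restrict (Set.Icc (0:ℝ) 1)))
    {C : ℝ} (hC : ∀ s ∈ Set.Icc (0:ℝ) 1, |f s| ≤ C) :
    IntegrableOn (fun s => G s * f s) (Set.Icc (0:ℝ) 1) := by
  apply Integrable.mono' (hGint.abs.mul_const C) (hGint.aestronglyMeasurable.mul hf)
  filter_upwards [ae_restrict_mem measurableSet_Icc] with s hs
  rw [Real.norm_eq_abs, Pi.mul_apply, abs_mul]
  exact mul_le_mul_of_nonneg_left (hC s hs) (abs_nonneg _)

private lemma meas0 {p : ℝ} (hp : 0 ≤ p) :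
    AEStronglyMeasurable (fun s : ℝ => s ^ p + (1 - s) ^ p)
      (volume.restrict (Set.Icc (0:ℝ) 1)) := by
  apply Continuous.aestronglyMeasurable
  exact (Real.continuous_rpow_const hp).add
    ((continuous_const.sub continuous_id).rpow_const fun x => Or.inr hp)

private lemma meas1 {p : ℝ} (hp : 0 ≤ p) :
    AEStronglyMeasurable
      (fun s : ℝ => s ^ p * Real.log s + (1 - s) ^ p * Real.log (1 - s))
      (volume.restrict (Set.Icc (0:ℝ) 1)) := by
  apply Measurable.aestronglyMeasurable
  have h1 : Measurable fun s : ℝ => s ^ p := (Real.continuous_rpow_const hp).measurable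
  have h2 : Measurable fun s : ℝ => (1 - s) ^ p :=
    ((continuous_const.sub continuous_id).rpow_const fun x => Or.inr hp).measurable
  exact (h1.mul Real.measurable_log).add
    (h2.mul (Real.measurable_log.comp (measurable_const.sub measurable_id)))

private lemma meas2 {p : ℝ} (hp : 0 ≤ p) :
    AEStronglyMeasurable
      (fun s : ℝ => s ^ p * (Real.log s) ^ 2 + (1 - s) ^ p * (Real.log (1 - s)) ^ 2)
      (volume.restrict (Set.Icc (0:ℝ) 1)) := by
  apply Measurable.aestronglyMeasurable
  have h1 : Measurable fun s : ℝ => s ^ p := (Real.continuous_rpow_const hp).measurable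
  have h2 : Measurable fun s : ℝ => (1 - s) ^ p :=
    ((continuous_const.sub continuous_id).rpow_const fun x => Or.inr hp).measurable
  exact (h1.mul (Real.measurable_log.pow_const 2)).add
    (h2.mul ((Real.measurable_log.comp (measurable_const.sub measurable_id)).pow_const 2))

private lemma rpow_mem01 {s : ℝ} (hs0 : 0 ≤ s) (hs1 : s ≤ 1) {p : ℝ} (hp : 0 ≤ p) :
    0 ≤ s ^ p ∧ s ^ p ≤ 1 :=
  ⟨Real.rpow_nonneg hs0 p, Real.rpow_le_one hs0 hs1 hp⟩

private lemma lamG_int {G : ℝ → ℝ} (hGint : IntegrableOn G (Set.Icc (0:ℝ) 1))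
    {p : ℝ} (hp : 0 ≤ p) :
    IntegrableOn (fun s => G s * (s ^ p + (1 - s) ^ p)) (Set.Icc (0:ℝ) 1) := by
  apply intG_mul hGint (meas0 hp) (C := 2)
  intro s hs
  obtain ⟨h1, h2⟩ := rpow_mem01 hs.1 hs.2 hp
  obtain ⟨h3, h4⟩ := rpow_mem01 (by linarith [hs.2] : (0:ℝ) ≤ 1 - s) (by linarith [hs.1]) hp
  rw [abs_of_nonneg (by linarith)]; linarith

private lemma bound1 {s : ℝ} (hs : s ∈ Set.Icc (0:ℝ) 1) {δ t : ℝ} (hδ : 0 < δ) (hts : δ ≤ t) :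
    |s ^ t * Real.log s + (1 - s) ^ t * Real.log (1 - s)| ≤ 2 / (δ * Real.exp 1) := by
  obtain ⟨hs0, hs1⟩ := hs
  have h1s0 : (0:ℝ) ≤ 1 - s := by linarith
  have h1s1 : 1 - s ≤ 1 := by linarith
  have ht : 0 < t := lt_of_lt_of_le hδ hts
  have e1 : |s ^ t * Real.log s| ≤ 1 / (δ * Real.exp 1) := by
    rw [abs_mul, abs_of_nonneg (Real.rpow_nonneg hs0 t)]
    exact rpow_log_le' hδ hts hs0 hs1
  have e2 : |(1 - s) ^ t * Real.log (1 - s)| ≤ 1 / (δ * Real.exp 1) := by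
    rw [abs_mul, abs_of_nonneg (Real.rpow_nonneg h1s0 t)]
    exact rpow_log_le' hδ hts h1s0 h1s1
  calc |s ^ t * Real.log s + (1 - s) ^ t * Real.log (1 - s)|
      ≤ |s ^ t * Real.log s| + |(1 - s) ^ t * Real.log (1 - s)| := abs_add_le _ _
    _ ≤ 1 / (δ * Real.exp 1) + 1 / (δ * Real.exp 1) := add_le_add e1 e2
    _ = 2 / (δ * Real.exp 1) := by ring

private lemma bound2 {s : ℝ} (hs : s ∈ Set.Icc (0:ℝ) 1) {δ t : ℝ} (hδ : 0 < δ) (hts : δ ≤ t) :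
    |s ^ t * (Real.log s) ^ 2 + (1 - s) ^ t * (Real.log (1 - s)) ^ 2|
      ≤ 2 * (1 / (δ / 2 * Real.exp 1)) ^ 2 := by
  obtain ⟨hs0, hs1⟩ := hs
  have h1s0 : (0:ℝ) ≤ 1 - s := by linarith
  have h1s1 : 1 - s ≤ 1 := by linarith
  have ht : 0 < t := lt_of_lt_of_le hδ hts
  have e1 := rpow_log_sq_le hδ hts hs0 hs1
  have e2 := rpow_log_sq_le hδ hts h1s0 h1s1
  have n1 : 0 ≤ s ^ t * (Real.log s) ^ 2 := by positivity
  have n2 : 0 ≤ (1 - s) ^ t * (Real.log (1 - s)) ^ 2 := by positivity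
  rw [abs_of_nonneg (by linarith)]
  linarith

private lemma lam1G_int {G : ℝ → ℝ} (hGint : IntegrableOn G (Set.Icc (0:ℝ) 1))
    {p : ℝ} (hp : 0 < p) :
    IntegrableOn (fun s => G s * (s ^ p * Real.log s + (1 - s) ^ p * Real.log (1 - s)))
      (Set.Icc (0:ℝ) 1) :=
  intG_mul hGint (meas1 hp.le) (fun s hs => bound1 hs hp le_rfl)

private lemma lam2G_int {G : ℝ → ℝ} (hGint : IntegrableOn G (Set.Icc (0:ℝ) 1))
    {p : ℝ} (hp : 0 < p) :
    IntegrableOn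
      (fun s => G s * (s ^ p * (Real.log s) ^ 2 + (1 - s) ^ p * (Real.log (1 - s)) ^ 2))
      (Set.Icc (0:ℝ) 1) :=
  intG_mul hGint (meas2 hp.le) (fun s hs => bound2 hs hp le_rfl)

private lemma ball_half {p x : ℝ} (hp : 0 < p) (hx : x ∈ Metric.ball p (p / 2)) :
    p / 2 ≤ x ∧ 0 < x := by
  rw [Metric.mem_ball, Real.dist_eq, abs_sub_lt_iff] at hx
  constructor <;> [linarith [hx.2]; linarith [hx.2]]

private lemma hasDerivAt_lamG {G : ℝ → ℝ} (hGint : IntegrableOn G (Set.Icc (0:ℝ) 1))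
    {p : ℝ} (hp : 0 < p) :
    HasDerivAt (lamG G) (lam1G G p) p := by
  have hhalf : 0 < p / 2 := half_pos hp
  have key := hasDerivAt_integral_of_dominated_loc_of_deriv_le
      (μ := volume.restrict (Set.Icc (0:ℝ) 1))
      (F := fun t s => G s * (s ^ t + (1 - s) ^ t))
      (F' := fun t s => G s * (s ^ t * Real.log s + (1 - s) ^ t * Real.log (1 - s)))
      (x₀ := p) (bound := fun s => |G s| * (2 / (p / 2 * Real.exp 1))) (Metric.ball_mem_nhds p hhalf)
      ?_ ?_ ?_ ?_ ?_ ?_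
  · exact key.2
  · filter_upwards [eventually_gt_nhds hp] with x hx
    exact hGint.aestronglyMeasurable.mul (meas0 hx.le)
  · exact lamG_int hGint hp.le
  · exact hGint.aestronglyMeasurable.mul (meas1 hp.le)
  · filter_upwards [ae_restrict_mem measurableSet_Icc] with s hs
    intro x hx
    rw [Real.norm_eq_abs, abs_mul]
    exact mul_le_mul_of_nonneg_left (bound1 hs hhalf (ball_half hp hx).1) (abs_nonneg _)
  · exact (hGint.abs.mul_const _)
  · filter_upwards [ae_restrict_mem measurableSet_Icc] with s hs
    intro x hx
    exact ((hasDerivAt_exp_base hs.1 (ball_half hp hx).2).add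
      (hasDerivAt_exp_base (by linarith [hs.2] : (0:ℝ) ≤ 1 - s) (ball_half hp hx).2)).const_mul
      (G s)

private lemma hasDerivAt_lam1G {G : ℝ → ℝ} (hGint : IntegrableOn G (Set.Icc (0:ℝ) 1))
    {p : ℝ} (hp : 0 < p) :
    HasDerivAt (lam1G G) (lam2G G p) p := by
  have hhalf : 0 < p / 2 := half_pos hp
  have key := hasDerivAt_integral_of_dominated_loc_of_deriv_le
      (μ := volume.restrict (Set.Icc (0:ℝ) 1))
      (F := fun t s => G s * (s ^ t * Real.log s + (1 - s) ^ t * Real.log (1 - s)))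
      (F' := fun t s =>
        G s * (s ^ t * (Real.log s) ^ 2 + (1 - s) ^ t * (Real.log (1 - s)) ^ 2))
      (x₀ := p) (bound := fun s => |G s| * (2 * (1 / (p / 2 / 2 * Real.exp 1)) ^ 2)) (Metric.ball_mem_nhds p hhalf)
      ?_ ?_ ?_ ?_ ?_ ?_
  · exact key.2
  · filter_upwards [eventually_gt_nhds hp] with x hx
    exact hGint.aestronglyMeasurable.mul (meas1 hx.le)
  · exact lam1G_int hGint hp
  · exact hGint.aestronglyMeasurable.mul (meas2 hp.le)
  · filter_upwards [ae_restrict_mem measurableSet_Icc] with s hs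
    intro x hx
    rw [Real.norm_eq_abs, abs_mul]
    exact mul_le_mul_of_nonneg_left (bound2 hs hhalf (ball_half hp hx).1) (abs_nonneg _)
  · exact (hGint.abs.mul_const _)
  · filter_upwards [ae_restrict_mem measurableSet_Icc] with s hs
    intro x hx
    have h1s : (0:ℝ) ≤ 1 - s := by linarith [hs.2]
    have hx0 : 0 < x := (ball_half hp hx).2
    have hd := (((hasDerivAt_exp_base hs.1 hx0).mul_const (Real.log s)).add
      ((hasDerivAt_exp_base h1s hx0).mul_const (Real.log (1 - s)))).const_mul (G s)
    exact hd.congr_deriv (by ring)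

private lemma key_pos {G f : ℝ → ℝ}
    (hGpos : ∀ s ∈ Set.Icc (0:ℝ) 1, 0 ≤ G s)
    (hGnd : 0 < ∫ s in Set.Icc (0:ℝ) 1, G s * (s * (1 - s)))
    (hfint : IntegrableOn (fun s => G s * f s) (Set.Icc (0:ℝ) 1))
    (hf0 : ∀ s ∈ Set.Icc (0:ℝ) 1, 0 ≤ f s)
    (hfpos : ∀ s ∈ Set.Ioo (0:ℝ) 1, 0 < f s) :
    0 < ∫ s in Set.Icc (0:ℝ) 1, G s * f s := by
  have hae : 0 ≤ᵐ[volume.restrict (Set.Icc (0:ℝ) 1)] fun s => G s * f s := by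
    filter_upwards [ae_restrict_mem measurableSet_Icc] with s hs
    exact mul_nonneg (hGpos s hs) (hf0 s hs)
  rcases (integral_nonneg_of_ae hae).lt_or_eq with h | h
  · exact h
  · exfalso
    have hz : (fun s => G s * f s) =ᵐ[volume.restrict (Set.Icc (0:ℝ) 1)] 0 :=
      (integral_eq_zero_iff_of_nonneg_ae hae hfint).mp h.symm
    have hz2 : (fun s => G s * (s * (1 - s))) =ᵐ[volume.restrict (Set.Icc (0:ℝ) 1)] 0 := by
      filter_upwards [hz, ae_restrict_mem measurableSet_Icc] with s h0 hs
      simp only [Pi.zero_apply] at h0 ⊢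
      rcases eq_or_lt_of_le hs.1 with h1 | h1
      · rw [← h1]; ring
      rcases eq_or_lt_of_le hs.2 with h2 | h2
      · rw [h2]; ring
      · have hfs : f s ≠ 0 := (hfpos s ⟨h1, h2⟩).ne'
        rcases mul_eq_zero.mp h0 with hG | hF
        · rw [hG, zero_mul]
        · exact absurd hF hfs
    rw [integral_congr_ae hz2] at hGnd
    simp at hGnd

private lemma self_le_rpow {s : ℝ} (hs0 : 0 ≤ s) (hs1 : s ≤ 1) {p : ℝ} (hp : 0 < p)
    (hp1 : p ≤ 1) : s ≤ s ^ p := by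
  rcases eq_or_lt_of_le hs0 with h | h
  · rw [← h, Real.zero_rpow hp.ne']
  · calc s = s ^ (1:ℝ) := (Real.rpow_one s).symm
      _ ≤ s ^ p := Real.rpow_le_rpow_of_exponent_ge h hs1 hp1

private lemma self_lt_rpow {s : ℝ} (hs0 : 0 < s) (hs1 : s < 1) {p : ℝ} (hp1 : p < 1) :
    s < s ^ p := by
  calc s = s ^ (1:ℝ) := (Real.rpow_one s).symm
    _ < s ^ p := Real.rpow_lt_rpow_of_exponent_gt hs0 hs1 hp1

private lemma rpow_le_self {s : ℝ} (hs0 : 0 ≤ s) (hs1 : s ≤ 1) {p : ℝ} (hp : 1 ≤ p) :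
    s ^ p ≤ s := by
  rcases eq_or_lt_of_le hs0 with h | h
  · rw [← h, Real.zero_rpow (by linarith : p ≠ 0)]
  · calc s ^ p ≤ s ^ (1:ℝ) := Real.rpow_le_rpow_of_exponent_ge h hs1 hp
      _ = s := Real.rpow_one s

private lemma rpow_lt_self {s : ℝ} (hs0 : 0 < s) (hs1 : s < 1) {p : ℝ} (hp : 1 < p) :
    s ^ p < s := by
  calc s ^ p < s ^ (1:ℝ) := Real.rpow_lt_rpow_of_exponent_gt hs0 hs1 hp
    _ = s := Real.rpow_one s

private lemma nd_int {G : ℝ → ℝ} (hGint : IntegrableOn G (Set.Icc (0:ℝ) 1)) :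
    IntegrableOn (fun s => G s * (s * (1 - s))) (Set.Icc (0:ℝ) 1) := by
  apply intG_mul hGint (f := fun s => s * (1 - s))
    ((continuous_id.mul (continuous_const.sub continuous_id)).aestronglyMeasurable) (C := 1)
  intro s hs
  obtain ⟨h0, h1⟩ := hs
  rw [abs_of_nonneg (by nlinarith)]
  nlinarith

private lemma lam_sub_one {G : ℝ → ℝ} (hGint : IntegrableOn G (Set.Icc (0:ℝ) 1))
    (hGnorm : ∫ s in Set.Icc (0:ℝ) 1, G s = 1) {p : ℝ} (hp : 0 ≤ p) :
    lamG G p - 1 = ∫ s in Set.Icc (0:ℝ) 1, G s * (s ^ p + (1 - s) ^ p - 1) := by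
  have h : ∫ s in Set.Icc (0:ℝ) 1, G s * (s ^ p + (1 - s) ^ p - 1)
      = (∫ s in Set.Icc (0:ℝ) 1, G s * (s ^ p + (1 - s) ^ p))
        - ∫ s in Set.Icc (0:ℝ) 1, G s := by
    rw [← integral_sub (lamG_int hGint hp) hGint]
    congr 1
    funext s
    ring
  rw [h, hGnorm]; rfl

private lemma lamG_one {G : ℝ → ℝ}
    (hGnorm : ∫ s in Set.Icc (0:ℝ) 1, G s = 1) : lamG G 1 = 1 := by
  rw [lamG]
  simp_rw [Real.rpow_one, show ∀ s : ℝ, s + (1 - s) = 1 from fun s => by ring, mul_one]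
  exact hGnorm

private lemma lamG_two {G : ℝ → ℝ} (hGint : IntegrableOn G (Set.Icc (0:ℝ) 1))
    (hGnorm : ∫ s in Set.Icc (0:ℝ) 1, G s = 1) :
    lamG G 2 - 1 = -2 * ∫ s in Set.Icc (0:ℝ) 1, G s * (s * (1 - s)) := by
  rw [lam_sub_one hGint hGnorm (by norm_num : (0:ℝ) ≤ 2)]
  have h2 : ∀ s : ℝ, G s * (s ^ (2:ℝ) + (1 - s) ^ (2:ℝ) - 1)
      = -2 * (G s * (s * (1 - s))) := by
    intro s
    rw [show (2:ℝ) = ((2:ℕ):ℝ) by norm_num, Real.rpow_natCast, Real.rpow_natCast]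
    ring
  simp_rw [h2]
  exact integral_const_mul _ _

private lemma lamG_three {G : ℝ → ℝ} (hGint : IntegrableOn G (Set.Icc (0:ℝ) 1))
    (hGnorm : ∫ s in Set.Icc (0:ℝ) 1, G s = 1) :
    lamG G 3 - 1 = -3 * ∫ s in Set.Icc (0:ℝ) 1, G s * (s * (1 - s)) := by
  rw [lam_sub_one hGint hGnorm (by norm_num : (0:ℝ) ≤ 3)]
  have h2 : ∀ s : ℝ, G s * (s ^ (3:ℝ) + (1 - s) ^ (3:ℝ) - 1)
      = -3 * (G s * (s * (1 - s))) := by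
    intro s
    rw [show (3:ℝ) = ((3:ℕ):ℝ) by norm_num, Real.rpow_natCast, Real.rpow_natCast]
    ring
  simp_rw [h2]
  exact integral_const_mul _ _

private lemma one_lt_lam {G : ℝ → ℝ}
    (hGpos : ∀ s ∈ Set.Icc (0:ℝ) 1, 0 ≤ G s)
    (hGint : IntegrableOn G (Set.Icc (0:ℝ) 1))
    (hGnorm : ∫ s in Set.Icc (0:ℝ) 1, G s = 1)
    (hGnd : 0 < ∫ s in Set.Icc (0:ℝ) 1, G s * (s * (1 - s)))
    {p : ℝ} (hp0 : 0 < p) (hp1 : p < 1) : 1 < lamG G p := by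
  have h := lam_sub_one hGint hGnorm hp0.le
  have hpos : 0 < ∫ s in Set.Icc (0:ℝ) 1, G s * (s ^ p + (1 - s) ^ p - 1) := by
    apply key_pos hGpos hGnd
    · apply intG_mul hGint (f := fun s => s ^ p + (1 - s) ^ p - 1) ((meas0 hp0.le).sub aestronglyMeasurable_const) (C := 3)
      intro s hs
      obtain ⟨a1, a2⟩ := rpow_mem01 hs.1 hs.2 hp0.le
      obtain ⟨a3, a4⟩ := rpow_mem01 (by linarith [hs.2] : (0:ℝ) ≤ 1 - s)
        (by linarith [hs.1]) hp0.le
      rw [abs_le]; constructor <;> linarith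
    · intro s hs
      have e1 := self_le_rpow hs.1 hs.2 hp0 hp1.le
      have e2 := self_le_rpow (by linarith [hs.2] : (0:ℝ) ≤ 1 - s) (by linarith [hs.1]) hp0 hp1.le
      linarith
    · intro s hs
      have e1 := self_lt_rpow hs.1 hs.2 hp1
      have e2 := self_le_rpow (by linarith [hs.2] : (0:ℝ) ≤ 1 - s) (by linarith [hs.1]) hp0 hp1.le
      linarith
  linarith

private lemma lam_lt_one {G : ℝ → ℝ}
    (hGpos : ∀ s ∈ Set.Icc (0:ℝ) 1, 0 ≤ G s)
    (hGint : IntegrableOn G (Set.Icc (0:ℝ) 1))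
    (hGnorm : ∫ s in Set.Icc (0:ℝ) 1, G s = 1)
    (hGnd : 0 < ∫ s in Set.Icc (0:ℝ) 1, G s * (s * (1 - s)))
    {p : ℝ} (hp : 1 < p) : lamG G p < 1 := by
  have hp0 : (0:ℝ) < p := by linarith
  have h := lam_sub_one hGint hGnorm hp0.le
  have hneg : 0 < ∫ s in Set.Icc (0:ℝ) 1, G s * (1 - (s ^ p + (1 - s) ^ p)) := by
    apply key_pos hGpos hGnd
    · apply intG_mul hGint (f := fun s => 1 - (s ^ p + (1 - s) ^ p)) (aestronglyMeasurable_const.sub (meas0 hp0.le)) (C := 3)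
      intro s hs
      obtain ⟨a1, a2⟩ := rpow_mem01 hs.1 hs.2 hp0.le
      obtain ⟨a3, a4⟩ := rpow_mem01 (by linarith [hs.2] : (0:ℝ) ≤ 1 - s)
        (by linarith [hs.1]) hp0.le
      rw [abs_le]; constructor <;> linarith
    · intro s hs
      have e1 := rpow_le_self hs.1 hs.2 hp.le
      have e2 := rpow_le_self (by linarith [hs.2] : (0:ℝ) ≤ 1 - s) (by linarith [hs.1]) hp.le
      linarith
    · intro s hs
      have e1 := rpow_lt_self hs.1 hs.2 hp
      have e2 := rpow_le_self (by linarith [hs.2] : (0:ℝ) ≤ 1 - s) (by linarith [hs.1]) hp.le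
      linarith
  have hflip : ∫ s in Set.Icc (0:ℝ) 1, G s * (1 - (s ^ p + (1 - s) ^ p))
      = -∫ s in Set.Icc (0:ℝ) 1, G s * (s ^ p + (1 - s) ^ p - 1) := by
    rw [← integral_neg]
    congr 1
    funext s
    ring
  rw [hflip] at hneg
  linarith

private lemma lam2G_pos {G : ℝ → ℝ}
    (hGpos : ∀ s ∈ Set.Icc (0:ℝ) 1, 0 ≤ G s)
    (hGint : IntegrableOn G (Set.Icc (0:ℝ) 1))
    (hGnd : 0 < ∫ s in Set.Icc (0:ℝ) 1, G s * (s * (1 - s)))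
    {p : ℝ} (hp : 0 < p) : 0 < lam2G G p := by
  apply key_pos hGpos hGnd (lam2G_int hGint hp)
  · intro s hs
    have h1 : (0:ℝ) ≤ 1 - s := by linarith [hs.2]
    have := Real.rpow_nonneg hs.1 p
    have := Real.rpow_nonneg h1 p
    positivity
  · intro s hs
    have hlog : Real.log s < 0 := Real.log_neg hs.1 hs.2
    have h1 : 0 < s ^ p * (Real.log s) ^ 2 :=
      mul_pos (Real.rpow_pos_of_pos hs.1 p) (sq_pos_of_neg hlog)
    have h2 : 0 ≤ (1 - s) ^ p * (Real.log (1 - s)) ^ 2 := by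
      have h1s : (0:ℝ) ≤ 1 - s := by linarith [hs.2]
      have := Real.rpow_nonneg h1s p
      positivity
    linarith

private lemma ae_Ioo :
    ∀ᵐ s ∂(volume.restrict (Set.Icc (0:ℝ) 1)), s ∈ Set.Ioo (0:ℝ) 1 := by
  have h0 : (volume : Measure ℝ) ({0, 1} : Set ℝ) = 0 :=
    ((Set.finite_singleton (1:ℝ)).insert 0).measure_zero _
  have h1 : ∀ᵐ s : ℝ ∂volume, s ∉ ({0, 1} : Set ℝ) := measure_eq_zero_iff_ae_notMem.mp h0
  filter_upwards [ae_restrict_mem measurableSet_Icc, ae_restrict_of_ae h1] with s hs hn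
  simp only [Set.mem_insert_iff, Set.mem_singleton_iff, not_or] at hn
  exact ⟨lt_of_le_of_ne hs.1 (Ne.symm hn.1), lt_of_le_of_ne hs.2 hn.2⟩

private lemma abs_bound2 {s : ℝ} (hs : s ∈ Set.Icc (0:ℝ) 1) {p : ℝ} (hp : 0 ≤ p) :
    |s ^ p + (1 - s) ^ p| ≤ 2 := by
  obtain ⟨a1, a2⟩ := rpow_mem01 hs.1 hs.2 hp
  obtain ⟨a3, a4⟩ := rpow_mem01 (by linarith [hs.2] : (0:ℝ) ≤ 1 - s) (by linarith [hs.1]) hp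
  rw [abs_of_nonneg (by linarith)]; linarith

private lemma lam_tendsto_two {G : ℝ → ℝ} (hGint : IntegrableOn G (Set.Icc (0:ℝ) 1))
    (hGnorm : ∫ s in Set.Icc (0:ℝ) 1, G s = 1) :
    Tendsto (lamG G) (𝓝[>] (0:ℝ)) (𝓝 2) := by
  have h2 : ∫ s in Set.Icc (0:ℝ) 1, G s * 2 = 2 := by
    rw [integral_mul_const, hGnorm, one_mul]
  rw [show (2:ℝ) = ∫ s in Set.Icc (0:ℝ) 1, G s * 2 from h2.symm]
  apply tendsto_integral_filter_of_dominated_convergence (bound := fun s => |G s| * 2)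
  · filter_upwards [self_mem_nhdsWithin] with p hp
    exact hGint.aestronglyMeasurable.mul (meas0 (le_of_lt hp))
  · filter_upwards [self_mem_nhdsWithin] with p hp
    filter_upwards [ae_restrict_mem measurableSet_Icc] with s hs
    rw [Real.norm_eq_abs, abs_mul]
    exact mul_le_mul_of_nonneg_left (abs_bound2 hs (le_of_lt hp)) (abs_nonneg _)
  · exact hGint.abs.mul_const 2
  · filter_upwards [ae_Ioo] with s hs
    have t1 : Tendsto (fun p : ℝ => s ^ p) (𝓝[>] (0:ℝ)) (𝓝 1) := by
      have := (Real.continuousAt_const_rpow (a := s) (b := 0) hs.1.ne').tendsto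
      rw [Real.rpow_zero] at this
      exact this.mono_left nhdsWithin_le_nhds
    have t2 : Tendsto (fun p : ℝ => (1 - s) ^ p) (𝓝[>] (0:ℝ)) (𝓝 1) := by
      have := (Real.continuousAt_const_rpow (a := 1 - s) (b := 0)
        (by linarith [hs.2] : (1:ℝ) - s ≠ 0)).tendsto
      rw [Real.rpow_zero] at this
      exact this.mono_left nhdsWithin_le_nhds
    have := (t1.add t2).const_mul (G s)
    norm_num at this
    exact this

private lemma lam_tendsto_zero {G : ℝ → ℝ} (hGint : IntegrableOn G (Set.Icc (0:ℝ) 1)) :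
    Tendsto (lamG G) atTop (𝓝 0) := by
  have h0 : (0:ℝ) = ∫ s in Set.Icc (0:ℝ) 1, (0:ℝ) := by simp
  rw [show (𝓝 (0:ℝ)) = 𝓝 (∫ s in Set.Icc (0:ℝ) 1, (0:ℝ)) by rw [← h0]]
  apply tendsto_integral_filter_of_dominated_convergence (bound := fun s => |G s| * 2)
  · filter_upwards [eventually_ge_atTop (0:ℝ)] with p hp
    exact hGint.aestronglyMeasurable.mul (meas0 hp)
  · filter_upwards [eventually_ge_atTop (0:ℝ)] with p hp
    filter_upwards [ae_restrict_mem measurableSet_Icc] with s hs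
    rw [Real.norm_eq_abs, abs_mul]
    exact mul_le_mul_of_nonneg_left (abs_bound2 hs hp) (abs_nonneg _)
  · exact hGint.abs.mul_const 2
  · filter_upwards [ae_Ioo] with s hs
    have t1 : Tendsto (fun p : ℝ => s ^ p) atTop (𝓝 0) :=
      tendsto_rpow_atTop_of_base_lt_one s (by linarith [hs.1]) hs.2
    have t2 : Tendsto (fun p : ℝ => (1 - s) ^ p) atTop (𝓝 0) :=
      tendsto_rpow_atTop_of_base_lt_one (1 - s) (by linarith [hs.2]) (by linarith [hs.1])
    have := (t1.add t2).const_mul (G s)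
    norm_num at this
    exact this


theorem stmt_19 (G : ℝ → ℝ)
    (hGpos : ∀ s ∈ Set.Icc (0 : ℝ) 1, 0 ≤ G s)
    (hGint : IntegrableOn G (Set.Icc (0 : ℝ) 1))
    (hGnorm : ∫ s in Set.Icc (0 : ℝ) 1, G s = 1)
    (hGnd : 0 < ∫ s in Set.Icc (0 : ℝ) 1, G s * (s * (1 - s))) :
    -- p μ(p) → 1 as p → 0⁺
    Tendsto (fun p : ℝ => p * muG G p) (nhdsWithin 0 (Set.Ioi 0)) (nhds 1) ∧
    -- μ(p) → 0 as p → ∞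
    Tendsto (muG G) atTop (nhds 0) ∧
    -- μ > 0 on (0,1), μ(1) = 0, μ < 0 on (1,∞)
    (∀ p : ℝ, 0 < p → p < 1 → 0 < muG G p) ∧
    muG G 1 = 0 ∧
    (∀ p : ℝ, 1 < p → muG G p < 0) ∧
    -- μ(2) = μ(3) = −∫₀¹ G(s) s(1−s) ds
    muG G 2 = -∫ s in Set.Icc (0 : ℝ) 1, G s * (s * (1 - s)) ∧
    muG G 3 = -∫ s in Set.Icc (0 : ℝ) 1, G s * (s * (1 - s)) ∧
    -- the unique critical point p₀, the global minimum point of μ, lies in (2,3)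
    (∃ p₀ : ℝ, 2 < p₀ ∧ p₀ < 3 ∧ deriv (muG G) p₀ = 0 ∧
      (∀ q : ℝ, 0 < q → deriv (muG G) q = 0 → q = p₀) ∧
      (∀ q : ℝ, 0 < q → muG G p₀ ≤ muG G q)) := by
  set I := ∫ s in Set.Icc (0:ℝ) 1, G s * (s * (1 - s)) with hI
  have hlam1 : lamG G 1 = 1 := lamG_one hGnorm
  have h2 : lamG G 2 - 1 = -2 * I := lamG_two hGint hGnorm
  have h3 : lamG G 3 - 1 = -3 * I := lamG_three hGint hGnorm
  have hmu2 : muG G 2 = -I := by rw [muG, h2]; ring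
  have hmu3 : muG G 3 = -I := by rw [muG, h3]; ring
  have hmuD : ∀ p : ℝ, 0 < p →
      HasDerivAt (muG G) ((lam1G G p * p - (lamG G p - 1)) / p ^ 2) p := by
    intro p hp
    have h := ((hasDerivAt_lamG hGint hp).sub_const 1).div (hasDerivAt_id p) hp.ne'
    simp only [id_eq, mul_one] at h
    exact h
  set ψ : ℝ → ℝ := fun q => lam1G G q * q - (lamG G q - 1) with hψdef
  have hψD : ∀ q : ℝ, 0 < q → HasDerivAt ψ (q * lam2G G q) q := by
    intro q hq
    have h := ((hasDerivAt_lam1G hGint hq).mul (hasDerivAt_id q)).sub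
      ((hasDerivAt_lamG hGint hq).sub_const 1)
    simp only [id_eq, mul_one] at h
    have e : q * lam2G G q = lam2G G q * q + lam1G G q - lam1G G q := by ring
    rw [e]
    exact h
  have hψmono : StrictMonoOn ψ (Set.Ioi (0:ℝ)) := by
    apply strictMonoOn_of_deriv_pos (convex_Ioi 0)
      (fun q hq => ((hψD q hq).continuousAt).continuousWithinAt)
    intro x hx
    rw [interior_Ioi] at hx
    rw [(hψD x hx).deriv]
    exact mul_pos hx (lam2G_pos hGpos hGint hGnd hx)
  have hmuderiv : ∀ q : ℝ, 0 < q → deriv (muG G) q = ψ q / q ^ 2 :=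
    fun q hq => (hmuD q hq).deriv
  have hcont23 : ContinuousOn (muG G) (Set.Icc 2 3) := by
    intro x hx
    have hx0 : (0:ℝ) < x := by have := hx.1; linarith
    exact ((hmuD x hx0).differentiableAt.continuousAt).continuousWithinAt
  obtain ⟨c, hc, hc0⟩ := exists_deriv_eq_zero (f := muG G) (by norm_num : (2:ℝ) < 3)
    hcont23 (by rw [hmu2, hmu3])
  have hc02 : (0:ℝ) < c := by have := hc.1; linarith
  have hψc : ψ c = 0 := by
    have h := hmuderiv c hc02
    rw [hc0] at h
    exact (div_eq_zero_iff.mp h.symm).resolve_right (pow_ne_zero 2 hc02.ne')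
  refine ⟨?_, ?_, ?_, ?_, ?_, hmu2, hmu3, c, hc.1, hc.2, hc0, ?_, ?_⟩
  · -- p μ → 1
    have heq : (fun p : ℝ => lamG G p - 1) =ᶠ[𝓝[>] (0:ℝ)] fun p => p * muG G p := by
      filter_upwards [self_mem_nhdsWithin] with p hp
      have hp' : p ≠ 0 := (Set.mem_Ioi.mp hp).ne'
      rw [muG]
      field_simp
    have h := (lam_tendsto_two hGint hGnorm).sub_const 1
    norm_num at h
    exact h.congr' heq
  · -- μ → 0
    have h1 : Tendsto (fun p : ℝ => (lamG G p - 1) * p⁻¹) atTop (𝓝 0) := by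
      have ha := (lam_tendsto_zero hGint).sub_const 1
      have hb := ha.mul tendsto_inv_atTop_zero
      norm_num at hb
      exact hb
    exact h1.congr fun p => by rw [muG, div_eq_mul_inv]
  · intro p hp0 hp1
    exact div_pos (by linarith [one_lt_lam hGpos hGint hGnorm hGnd hp0 hp1]) hp0
  · rw [muG, hlam1]; norm_num
  · intro p hp
    exact div_neg_of_neg_of_pos
      (by linarith [lam_lt_one hGpos hGint hGnorm hGnd hp]) (by linarith)
  · -- uniqueness
    intro q hq hq0
    have hψq : ψ q = 0 := by
      have h := hmuderiv q hq
      rw [hq0] at h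
      exact (div_eq_zero_iff.mp h.symm).resolve_right (pow_ne_zero 2 hq.ne')
    exact hψmono.injOn (Set.mem_Ioi.mpr hq) (Set.mem_Ioi.mpr hc02) (by rw [hψq, hψc])
  · -- global minimum
    intro q hq
    rcases lt_trichotomy q c with hlt | heq | hgt
    · have hanti : AntitoneOn (muG G) (Set.Icc q c) := by
        apply antitoneOn_of_deriv_nonpos (convex_Icc q c)
        · intro x hx
          have hx0 : (0:ℝ) < x := lt_of_lt_of_le hq hx.1
          exact ((hmuD x hx0).differentiableAt.continuousAt).continuousWithinAt
        · intro x hx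
          rw [interior_Icc] at hx
          have hx0 : (0:ℝ) < x := lt_trans hq hx.1
          exact (hmuD x hx0).differentiableAt.differentiableWithinAt
        · intro x hx
          rw [interior_Icc] at hx
          have hx0 : (0:ℝ) < x := lt_trans hq hx.1
          rw [hmuderiv x hx0]
          apply div_nonpos_of_nonpos_of_nonneg _ (sq_nonneg x)
          have := hψmono (Set.mem_Ioi.mpr hx0) (Set.mem_Ioi.mpr hc02) hx.2
          linarith
      exact hanti ⟨le_refl q, hlt.le⟩ ⟨hlt.le, le_refl c⟩ hlt.le
    · rw [heq]
    · have hmono : MonotoneOn (muG G) (Set.Icc c q) := by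
        apply monotoneOn_of_deriv_nonneg (convex_Icc c q)
        · intro x hx
          have hx0 : (0:ℝ) < x := lt_of_lt_of_le hc02 hx.1
          exact ((hmuD x hx0).differentiableAt.continuousAt).continuousWithinAt
        · intro x hx
          rw [interior_Icc] at hx
          have hx0 : (0:ℝ) < x := lt_trans hc02 hx.1
          exact (hmuD x hx0).differentiableAt.differentiableWithinAt
        · intro x hx
          rw [interior_Icc] at hx
          have hx0 : (0:ℝ) < x := lt_trans hc02 hx.1
          rw [hmuderiv x hx0]
          apply div_nonneg _ (sq_nonneg x)
          have := hψmono (Set.mem_Ioi.mpr hc02) (Set.mem_Ioi.mpr hx0) hx.1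
          linarith
      exact hmono ⟨le_refl c, hgt.le⟩ ⟨hgt.le, le_refl q⟩ hgt.le
end
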